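/- arXiv:1510.08393 — 3 statements merged into one kernel-verified Lean document; each statement's English description precedes it below -/
import Mathlib

section
/- A tree language L ⊆ T(Σ, {x1,…,xk}) (over a finite signature Σ with x1,…,xk treated as constants) is a regular tree language if and only if there exist a finite extension Σ′ of Σ by constants, a regular-EUF formula φ over Σ′ ∪ {f} with f of arity k, and a Σ′-compatible regular tree grammar G with L(G) ⊆ T(Σ, {x1,…,xk}), such that L = {w ∈ L(G) : φ{w/f} is valid}; i.e., the solution sets of regular SyGuS-EUF problems are exactly the regular tree languages. -/
namespace SyGuS

/-- Terms over a ranked alphabet: symbols `F`, each of arity `ar f`. -/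
inductive Tm (F : Type) (ar : F → ℕ) : Type
  | app (f : F) (args : Fin (ar f) → Tm F ar) : Tm F ar

/-- Arity function on `F ⊕ Fin k`: the `k` extra symbols are constants
(the variables `x₁,…,x_k`, treated as constants). -/
abbrev varAr {F : Type} (ar : F → ℕ) (k : ℕ) : F ⊕ Fin k → ℕ := Sum.elim ar fun _ => 0

/-- Arity function on `F ⊕ Unit`: the extra symbol is the function symbol `f` of arity `k`. -/
abbrev fAr {F : Type} (ar : F → ℕ) (k : ℕ) : F ⊕ Unit → ℕ := Sum.elim ar fun _ => k

/-- A (nonempty) first-order structure for the ranked alphabet `(F, ar)`. -/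
structure Str (F : Type) (ar : F → ℕ) : Type 1 where
  D : Type
  [nonemptyD : Nonempty D]
  interp : (f : F) → (Fin (ar f) → D) → D

attribute [instance] Str.nonemptyD

/-- Evaluation of a ground term in a structure. -/
def Tm.eval {F : Type} {ar : F → ℕ} (M : Str F ar) : Tm F ar → M.D
  | .app f args => M.interp f fun i => (args i).eval M

/-- First-order substitution: replace the variables `x₁,…,x_k` by terms. -/
def Tm.instVars {F : Type} {ar : F → ℕ} {k : ℕ} (σ : Fin k → Tm F ar) :
    Tm (F ⊕ Fin k) (varAr ar k) → Tm F ar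
  | .app (Sum.inl g) args => .app g fun i => Tm.instVars σ (args i)
  | .app (Sum.inr i) _ => σ i

/-- Second-order substitution `·{w/f}`: replace every application `f(s₁,…,s_k)` of the
distinguished symbol `f` by `w{s₁/x₁,…,s_k/x_k}`. -/
def Tm.soSubst {F : Type} {ar : F → ℕ} {k : ℕ} (w : Tm (F ⊕ Fin k) (varAr ar k)) :
    Tm (F ⊕ Unit) (fAr ar k) → Tm F ar
  | .app (Sum.inl g) args => .app g fun i => Tm.soSubst w (args i)
  | .app (Sum.inr _) args => Tm.instVars (fun i => Tm.soSubst w (args i)) w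

/-- Renaming of symbols along an arity-preserving map. -/
def Tm.rename {F G : Type} {arF : F → ℕ} {arG : G → ℕ} (h : F → G)
    (hh : ∀ f, arG (h f) = arF f) : Tm F arF → Tm G arG
  | .app f args => .app (h f) fun i => (args (Fin.cast (hh f) i)).rename h hh

/-- Equational consequence: `E ⊢ s = t` iff every structure satisfying all
equations of `E` also satisfies `s = t`. -/
def EqCons {F : Type} {ar : F → ℕ} (E : Set (Tm F ar × Tm F ar)) (s t : Tm F ar) : Prop :=
  ∀ M : Str F ar, (∀ e ∈ E, Tm.eval M e.1 = Tm.eval M e.2) → s.eval M = t.eval M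

/-- Number of occurrences of the distinguished symbol `f` (the `Sum.inr` symbol) in a term. -/
def Tm.countF {F : Type} {ar : F → ℕ} {k : ℕ} : Tm (F ⊕ Unit) (fAr ar k) → ℕ
  | .app (Sum.inl _) args => ∑ i, Tm.countF (args i)
  | .app (Sum.inr _) args => 1 + ∑ i, Tm.countF (args i)

/-- A literal: a (non-negated if `pos`, negated otherwise) equation between terms. -/
structure Lit (F : Type) (ar : F → ℕ) : Type where
  pos : Bool
  lhs : Tm F ar
  rhs : Tm F ar

def Lit.holds {F : Type} {ar : F → ℕ} (M : Str F ar) (l : Lit F ar) : Prop :=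
  if l.pos then l.lhs.eval M = l.rhs.eval M else l.lhs.eval M ≠ l.rhs.eval M

/-- A clause: a disjunction of (possibly negated) equations, ITE-free by construction. -/
abbrev Clause (F : Type) (ar : F → ℕ) := List (Lit F ar)

def Clause.holds {F : Type} {ar : F → ℕ} (M : Str F ar) (c : Clause F ar) : Prop :=
  ∃ l ∈ c, l.holds M

/-- A clause is valid if it holds in every nonempty structure. -/
def Clause.valid {F : Type} {ar : F → ℕ} (c : Clause F ar) : Prop :=
  ∀ M : Str F ar, c.holds M

/-- Number of occurrences of `f` in a literal (an equation). -/
def Lit.countF {F : Type} {ar : F → ℕ} {k : ℕ} (l : Lit (F ⊕ Unit) (fAr ar k)) : ℕ :=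
  l.lhs.countF + l.rhs.countF

/-- Case-1 regular clause: every equation has at most one occurrence of `f`,
and `f` occurs only in non-negated equations. -/
def Clause.Case1 {F : Type} {ar : F → ℕ} {k : ℕ} (c : Clause (F ⊕ Unit) (fAr ar k)) : Prop :=
  (∀ l ∈ c, l.countF ≤ 1) ∧ (∀ l ∈ c, l.pos = false → l.countF = 0)

/-- Case-2 regular clause: every equation has at most one occurrence of `f`, and `f`
occurs in exactly one negated equation of the clause and nowhere else. -/
def Clause.Case2 {F : Type} {ar : F → ℕ} {k : ℕ} (c : Clause (F ⊕ Unit) (fAr ar k)) : Prop :=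
  (∀ l ∈ c, l.countF ≤ 1) ∧ (∀ l ∈ c, l.pos = true → l.countF = 0) ∧
  (c.filter (fun l => l.pos = false ∧ l.countF ≠ 0)).length = 1

/-- A regular clause is one of case 1 or case 2. -/
def Clause.Regular {F : Type} {ar : F → ℕ} {k : ℕ} (c : Clause (F ⊕ Unit) (fAr ar k)) : Prop :=
  c.Case1 ∨ c.Case2

/-- Second-order substitution `·{w/f}` on literals. -/
def Lit.soSubst {F : Type} {ar : F → ℕ} {k : ℕ} (w : Tm (F ⊕ Fin k) (varAr ar k))
    (l : Lit (F ⊕ Unit) (fAr ar k)) : Lit F ar :=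
  ⟨l.pos, Tm.soSubst w l.lhs, Tm.soSubst w l.rhs⟩

/-- Second-order substitution `·{w/f}` on clauses. -/
def Clause.soSubst {F : Type} {ar : F → ℕ} {k : ℕ} (w : Tm (F ⊕ Fin k) (varAr ar k))
    (c : Clause (F ⊕ Unit) (fAr ar k)) : Clause F ar :=
  c.map (Lit.soSubst w)

/-- A regular-EUF formula: a finite conjunction of regular clauses. -/
structure RegEUF (F : Type) (ar : F → ℕ) (k : ℕ) : Type where
  clauses : List (Clause (F ⊕ Unit) (fAr ar k))
  regular : ∀ c ∈ clauses, c.Regular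

/-- `w` is a solution for a regular-EUF formula if every clause becomes valid
after substituting `w` for `f`. -/
def RegEUF.solves {F : Type} {ar : F → ℕ} {k : ℕ} (φ : RegEUF F ar k)
    (w : Tm (F ⊕ Fin k) (varAr ar k)) : Prop :=
  ∀ c ∈ φ.clauses, (c.soSubst w).valid

/-- Deterministic bottom-up tree automaton with a partial transition function. -/
structure DTA (F : Type) (ar : F → ℕ) : Type 1 where
  Q : Type
  [fintypeQ : Fintype Q]
  δ : (f : F) → (Fin (ar f) → Q) → Option Q
  final : Set Q

attribute [instance] DTA.fintypeQ

/-- Sequence a finite tuple of options. -/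
def finSeq {Q : Type} : {n : ℕ} → (Fin n → Option Q) → Option (Fin n → Q)
  | 0, _ => some (fun i => i.elim0)
  | _ + 1, f => (f 0).bind fun q => (finSeq fun i => f i.succ).map (Fin.cons q)

/-- The (partial) run of the automaton on a term: `δ` extended to terms. -/
def DTA.run {F : Type} {ar : F → ℕ} (A : DTA F ar) : Tm F ar → Option A.Q
  | .app f args => (finSeq fun i => A.run (args i)).bind fun qs => A.δ f qs

/-- The language accepted by the automaton. -/
def DTA.lang {F : Type} {ar : F → ℕ} (A : DTA F ar) : Set (Tm F ar) :=
  { t | ∃ q ∈ A.final, A.run t = some q }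

/-- A tree language is regular if it is the language of some deterministic
bottom-up tree automaton. -/
def IsRegularTreeLang {F : Type} {ar : F → ℕ} (L : Set (Tm F ar)) : Prop :=
  ∃ A : DTA F ar, L = A.lang

/-- Regular tree grammars: finitely many productions rewriting a nonterminal `A` into
`g(t₁,…,t_k)`, where each `tᵢ` is a nonterminal or a ground term. -/
structure RTG (F : Type) (ar : F → ℕ) : Type 1 where
  N : Type
  [fintypeN : Fintype N]
  start : N
  prods : Set (N × Σ g : F, (Fin (ar g) → N ⊕ Tm F ar))
  finite_prods : prods.Finite

attribute [instance] RTG.fintypeN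

/-- Derivability of a term from a nonterminal of the grammar. -/
inductive RTG.Derives {F : Type} {ar : F → ℕ} (G : RTG F ar) : G.N → Tm F ar → Prop
  | step (A : G.N) (g : F) (args : Fin (ar g) → G.N ⊕ Tm F ar) (ts : Fin (ar g) → Tm F ar)
      (h : (A, ⟨g, args⟩) ∈ G.prods)
      (hnt : ∀ i B, args i = Sum.inl B → G.Derives B (ts i))
      (htm : ∀ i u, args i = Sum.inr u → ts i = u) :
      G.Derives A (.app g ts)

/-- The language of a regular tree grammar: terms derivable from the start symbol. -/
def RTG.lang {F : Type} {ar : F → ℕ} (G : RTG F ar) : Set (Tm F ar) :=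
  { t | G.Derives G.start t }

/-- Embedding of candidate expressions over `Σ ∪ {x₁,…,x_k}` into the terms over the
extension `Σ ∪ {c₁,…,c_c} ∪ {x₁,…,x_k}` of `Σ` by `c` fresh constants. -/
def embedW {F : Type} {ar : F → ℕ} {k c : ℕ} :
    Tm (F ⊕ Fin k) (varAr ar k) →
      Tm ((F ⊕ Fin c) ⊕ Fin k) (varAr (Sum.elim ar fun _ => 0) k) :=
  Tm.rename (Sum.map Sum.inl id) (by rintro (g | i) <;> rfl)

/- ===================== Development ===================== -/

set_option maxHeartbeats 1000000

noncomputable section Dev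

open Classical

namespace SyGuSProof

open SyGuS

universe u

/-! ### Generic utilities -/

theorem finSeq_succ {Q : Type} {n : ℕ} (f : Fin (n + 1) → Option Q) :
    finSeq f = (f 0).bind fun q => (finSeq fun i => f i.succ).map (Fin.cons q) := rfl

theorem finSeq_some {Q : Type} : ∀ {n : ℕ} (f : Fin n → Q),
    finSeq (fun i => some (f i)) = some f := by
  intro n
  induction n with
  | zero =>
    intro f
    show some _ = some f
    exact congrArg some (funext fun i => i.elim0)
  | succ n ih =>
    intro f
    rw [finSeq_succ]
    show Option.map _ _ = _
    rw [ih (fun i => f i.succ)]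
    show some _ = some f
    refine congrArg some (funext fun i => ?_)
    refine Fin.cases rfl (fun j => rfl) i

theorem finSeq_eq_some {Q : Type} : ∀ {n : ℕ} (f : Fin n → Option Q) (g : Fin n → Q),
    finSeq f = some g → ∀ i, f i = some (g i) := by
  intro n
  induction n with
  | zero => intro f g _ i; exact i.elim0
  | succ n ih =>
    intro f g h i
    rw [finSeq_succ] at h
    cases h0 : f 0 with
    | none => rw [h0] at h; simp at h
    | some q =>
      rw [h0] at h
      simp only [Option.bind_some] at h
      cases h1 : finSeq (fun i => f i.succ) with
      | none => rw [h1] at h; simp at h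
      | some r =>
        rw [h1] at h
        have hg : Fin.cons q r = g := by simpa using h
        refine Fin.cases ?_ (fun j => ?_) i
        · rw [h0, ← hg]; rfl
        · rw [ih _ _ h1 j, ← hg]; rfl

theorem finSeq_none {Q : Type} : ∀ {n : ℕ} (f : Fin n → Option Q) (i : Fin n),
    f i = none → finSeq f = none := by
  intro n f i hi
  cases h : finSeq f with
  | none => rfl
  | some g => exact absurd (finSeq_eq_some f g h i ▸ hi) (by simp)

/-- Injectivity of `Tm.app` in the arguments. -/
theorem Tm.app_inj {F : Type} {ar : F → ℕ} {g : F} {a b : Fin (ar g) → Tm F ar}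
    (h : Tm.app g a = Tm.app g b) : a = b := by
  injection h

theorem Tm.app_inj_symb {F : Type} {ar : F → ℕ} {g g' : F} {a : Fin (ar g) → Tm F ar}
    {b : Fin (ar g') → Tm F ar} (h : Tm.app g a = Tm.app g' b) : g = g' := by
  injection h

/-! ### Subterms and size -/

variable {H : Type} {arH : H → ℕ}

/-- Reflexive-transitive subterm relation. -/
inductive Sub : Tm H arH → Tm H arH → Prop
  | refl (t : Tm H arH) : Sub t t
  | child {x : Tm H arH} (g : H) (args : Fin (arH g) → Tm H arH) (i : Fin (arH g)) :
      Sub x (args i) → Sub x (Tm.app g args)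

theorem Sub.trans {x y z : Tm H arH} (h1 : Sub x y) (h2 : Sub y z) : Sub x z := by
  induction h2 with
  | refl => exact h1
  | child g args i _ ih => exact Sub.child g args i ih

/-- The set of subterms of a term is finite. -/
theorem finite_subs (t : Tm H arH) : {x : Tm H arH | Sub x t}.Finite := by
  induction t with
  | app g args ih =>
    have : {x : Tm H arH | Sub x (Tm.app g args)} ⊆
        {Tm.app g args} ∪ ⋃ i, {x | Sub x (args i)} := by
      intro x hx
      cases hx with
      | refl => exact Or.inl rfl
      | child g args i h => exact Or.inr (Set.mem_iUnion.2 ⟨i, h⟩)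
    exact Set.Finite.subset ((Set.finite_singleton _).union (Set.finite_iUnion ih)) this

def tsize : Tm H arH → ℕ
  | .app _ args => 1 + ∑ i, tsize (args i)

theorem tsize_child_lt {g : H} (args : Fin (arH g) → Tm H arH) (i : Fin (arH g)) :
    tsize (args i) < tsize (Tm.app g args) := by
  have : tsize (args i) ≤ ∑ j, tsize (args j) :=
    Finset.single_le_sum (f := fun j => tsize (args j)) (fun _ _ => Nat.zero_le _)
      (Finset.mem_univ i)
  have h2 : tsize (Tm.app g args) = 1 + ∑ j, tsize (args j) := rfl
  omega

theorem tsize_le_of_sub {x y : Tm H arH} (h : Sub x y) : tsize x ≤ tsize y := by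
  induction h with
  | refl => exact le_rfl
  | child g args i _ ih => exact le_of_lt (lt_of_le_of_lt ih (tsize_child_lt args i))

/-! ### Congruence closure -/

/-- Congruence closure of a set of ground equations. -/
inductive cc (E : Set (Tm H arH × Tm H arH)) : Tm H arH → Tm H arH → Prop
  | base {a b : Tm H arH} : (a, b) ∈ E → cc E a b
  | refl (a : Tm H arH) : cc E a a
  | symm {a b : Tm H arH} : cc E a b → cc E b a
  | trans {a b c : Tm H arH} : cc E a b → cc E b c → cc E a c
  | congr {g : H} {a b : Fin (arH g) → Tm H arH} :
      (∀ i, cc E (a i) (b i)) → cc E (Tm.app g a) (Tm.app g b)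

theorem cc_mono {E E' : Set (Tm H arH × Tm H arH)} (hE : E ⊆ E') {x y : Tm H arH}
    (h : cc E x y) : cc E' x y := by
  induction h with
  | base hab => exact cc.base (hE hab)
  | refl a => exact cc.refl a
  | symm _ ih => exact ih.symm
  | trans _ _ ih1 ih2 => exact ih1.trans ih2
  | congr _ ih => exact cc.congr ih

theorem cc_of_gen {E E' : Set (Tm H arH × Tm H arH)}
    (hE : ∀ p ∈ E, cc E' p.1 p.2) {x y : Tm H arH} (h : cc E x y) : cc E' x y := by
  induction h with
  | base hab => exact hE _ hab
  | refl a => exact cc.refl a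
  | symm _ ih => exact ih.symm
  | trans _ _ ih1 ih2 => exact ih1.trans ih2
  | congr _ ih => exact cc.congr ih

def ccSetoid (E : Set (Tm H arH × Tm H arH)) : Setoid (Tm H arH) :=
  ⟨cc E, cc.refl, cc.symm, cc.trans⟩

/-- Evaluation respects the congruence closure in any model of `E`. -/
theorem cc_eval {E : Set (Tm H arH × Tm H arH)} (M : Str H arH)
    (hM : ∀ e ∈ E, Tm.eval M e.1 = Tm.eval M e.2) {x y : Tm H arH} (h : cc E x y) :
    Tm.eval M x = Tm.eval M y := by
  induction h with
  | base hab => exact hM _ hab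
  | refl a => rfl
  | symm _ ih => exact ih.symm
  | trans _ _ ih1 ih2 => exact ih1.trans ih2
  | congr _ ih => show M.interp _ _ = M.interp _ _; exact congrArg _ (funext ih)

/-- The term model of a set of ground equations. -/
def termModel (E : Set (Tm H arH × Tm H arH)) [ne : Nonempty (Tm H arH)] : Str H arH where
  D := Quotient (ccSetoid E)
  nonemptyD := ⟨Quotient.mk _ ne.some⟩
  interp g d := Quotient.mk _ (Tm.app g (fun i => (d i).out))

theorem termModel_eval (E : Set (Tm H arH × Tm H arH)) [Nonempty (Tm H arH)]
    (t : Tm H arH) : Tm.eval (termModel E) t = Quotient.mk (ccSetoid E) t := by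
  induction t with
  | app g args ih =>
    show Quotient.mk _ (Tm.app g _) = _
    refine Quotient.sound (cc.congr fun i => ?_)
    have h1 : Quotient.mk (ccSetoid E) ((Tm.eval (termModel E) (args i)).out) =
        Quotient.mk (ccSetoid E) (args i) := by
      rw [ih i, Quotient.out_eq]
    exact Quotient.exact h1

theorem termModel_models (E : Set (Tm H arH × Tm H arH)) [Nonempty (Tm H arH)] :
    ∀ e ∈ E, Tm.eval (termModel E) e.1 = Tm.eval (termModel E) e.2 := by
  intro e he
  rw [termModel_eval, termModel_eval]
  exact Quotient.sound (cc.base he)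

/-- Pairs of negative literals of a ground clause. -/
def negPairs (c : Clause H arH) : Set (Tm H arH × Tm H arH) :=
  {p | ∃ l ∈ c, l.pos = false ∧ p = (l.lhs, l.rhs)}

/-- Key validity characterization for ground clauses (Lemma V). -/
theorem clause_valid_iff (c : Clause H arH) (hne : c ≠ []) :
    c.valid ↔ ∃ l ∈ c, l.pos = true ∧ cc (negPairs c) l.lhs l.rhs := by
  have : Nonempty (Tm H arH) := by
    rcases c with _ | ⟨l, c⟩
    · exact absurd rfl hne
    · exact ⟨l.lhs⟩
  constructor
  · intro hv
    rcases hv (termModel (negPairs c)) with ⟨l, hl, hh⟩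
    unfold Lit.holds at hh
    by_cases hp : l.pos = true
    · rw [if_pos hp] at hh
      rw [termModel_eval, termModel_eval] at hh
      exact ⟨l, hl, hp, Quotient.exact hh⟩
    · rw [if_neg hp] at hh
      exfalso
      apply hh
      rw [termModel_eval, termModel_eval]
      exact Quotient.sound (cc.base ⟨l, hl, by simpa using hp, rfl⟩)
  · rintro ⟨l, hl, hp, hcc⟩ M
    by_cases hM : ∀ e ∈ negPairs c, Tm.eval M e.1 = Tm.eval M e.2
    · exact ⟨l, hl, by unfold Lit.holds; rw [if_pos hp]; exact cc_eval M hM hcc⟩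
    · push_neg at hM
      rcases hM with ⟨e, ⟨l', hl', hp', hpe⟩, hne'⟩
      refine ⟨l', hl', ?_⟩
      unfold Lit.holds
      rw [if_neg (by simp [hp'])]
      subst hpe
      exact hne'

/-! ### The congruence-closure state machinery -/

section CCAuto

open scoped Classical

variable (E : Set (Tm H arH × Tm H arH)) (S : Set (Tm H arH))

/-- Setoid on elements of `S` induced by the congruence closure. -/
def setoidS : Setoid ↥S := ⟨fun a b => cc E ↑a ↑b, ⟨fun a => cc.refl _, cc.symm, cc.trans⟩⟩

/-- Canonically pick a representative of the class of `z` among `S`, if any. -/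
def pick (z : Tm H arH) : Option ↥S :=
  if h : ∃ s : ↥S, cc E z ↑s then some (Quotient.mk (setoidS E S) h.choose).out else none

theorem pick_sound {z : Tm H arH} {r : ↥S} (h : pick E S z = some r) : cc E z ↑r := by
  unfold pick at h
  split at h
  · rename_i hex
    have h1 : cc E z ↑(hex.choose) := hex.choose_spec
    have h2 : cc E ↑((Quotient.mk (setoidS E S) hex.choose).out) ↑(hex.choose) :=
      Quotient.mk_out (s := setoidS E S) hex.choose
    have h3 : (Quotient.mk (setoidS E S) hex.choose).out = r := by injection h
    rw [← h3]
    exact h1.trans h2.symm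
  · exact absurd h (by simp)

theorem pick_congr {z z' : Tm H arH} (h : cc E z z') : pick E S z = pick E S z' := by
  unfold pick
  by_cases hex : ∃ s : ↥S, cc E z ↑s
  · have hex' : ∃ s : ↥S, cc E z' ↑s := ⟨hex.choose, h.symm.trans hex.choose_spec⟩
    rw [dif_pos hex, dif_pos hex']
    have : Quotient.mk (setoidS E S) hex.choose = Quotient.mk (setoidS E S) hex'.choose :=
      Quotient.sound (hex.choose_spec.symm.trans (h.trans hex'.choose_spec))
    rw [this]
  · have hex' : ¬ ∃ s : ↥S, cc E z' ↑s := fun ⟨s, hs⟩ => hex ⟨s, h.trans hs⟩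
    rw [dif_neg hex, dif_neg hex']

theorem pick_none {z : Tm H arH} (h : pick E S z = none) : ¬ ∃ s : ↥S, cc E z ↑s := by
  unfold pick at h
  split at h
  · simp at h
  · assumption

/-- The state of a ground term: the canonical representative of its class among `S`,
computed bottom-up (with `none` propagation). -/
def classOf : Tm H arH → Option ↥S
  | .app g args => (finSeq fun i => classOf (args i)).bind fun r =>
      pick E S (.app g fun i => ↑(r i))

theorem classOf_app (g : H) (args : Fin (arH g) → Tm H arH) :
    classOf E S (Tm.app g args) = (finSeq fun i => classOf E S (args i)).bind fun r =>
      pick E S (.app g fun i => ↑(r i)) := rfl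

theorem classOf_sound : ∀ {z : Tm H arH} {r : ↥S}, classOf E S z = some r → cc E z ↑r := by
  intro z
  induction z with
  | app g args ih =>
    intro r h
    rw [classOf_app] at h
    cases hfs : finSeq fun i => classOf E S (args i) with
    | none => rw [hfs] at h; simp at h
    | some rs =>
      rw [hfs] at h
      simp only [Option.bind_some] at h
      have hpick : cc E (Tm.app g fun i => ↑(rs i)) ↑r := pick_sound E S h
      have hargs : ∀ i, cc E (args i) ↑(rs i) := fun i => ih i (finSeq_eq_some _ _ hfs i)
      exact (cc.congr hargs).trans hpick

/-- `classOf` expressed via `pick` (for terms with a `some` state). -/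
theorem classOf_pick {z : Tm H arH} {r : ↥S} (h : classOf E S z = some r) :
    pick E S z = some r := by
  cases z with
  | app g args =>
    rw [classOf_app] at h
    cases hfs : finSeq fun i => classOf E S (args i) with
    | none => rw [hfs] at h; simp at h
    | some rs =>
      rw [hfs] at h
      simp only [Option.bind_some] at h
      have hargs : ∀ i, cc E (args i) ↑(rs i) :=
        fun i => classOf_sound E S (finSeq_eq_some _ _ hfs i)
      rw [pick_congr E S (cc.congr hargs)]
      exact h

theorem classOf_mem (hS : ∀ x y : Tm H arH, Sub x y → y ∈ S → x ∈ S) : ∀ {z : Tm H arH}, z ∈ S → ∃ r, classOf E S z = some r := by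
  intro z
  induction z with
  | app g args ih =>
    intro hz
    have hargsS : ∀ i, args i ∈ S := fun i => hS _ _ (Sub.child g args i (Sub.refl _)) hz
    choose rs hrs using fun i => ih i (hargsS i)
    have hfs : (finSeq fun i => classOf E S (args i)) = some rs := by
      have : (fun i => classOf E S (args i)) = fun i => some (rs i) := funext hrs
      rw [this]; exact finSeq_some rs
    rw [classOf_app, hfs]
    simp only [Option.bind_some]
    have hcc : cc E (Tm.app g fun i => ↑(rs i)) (Tm.app g args) :=
      cc.congr fun i => (classOf_sound E S (hrs i)).symm
    unfold pick
    rw [dif_pos ⟨⟨_, hz⟩, hcc⟩]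
    exact ⟨_, rfl⟩

/-- Similarity: equality of states, refined structurally on fresh terms. -/
inductive Sim : Tm H arH → Tm H arH → Prop
  | rel {x y : Tm H arH} {r : ↥S} : classOf E S x = some r → classOf E S y = some r → Sim x y
  | node {g : H} {a b : Fin (arH g) → Tm H arH} : (∀ i, Sim (a i) (b i)) →
      classOf E S (Tm.app g a) = none → classOf E S (Tm.app g b) = none →
      Sim (Tm.app g a) (Tm.app g b)

theorem sim_classOf {x y : Tm H arH} (h : Sim E S x y) : classOf E S x = classOf E S y := by
  cases h with
  | rel hx hy => rw [hx, hy]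
  | node _ hx hy => rw [hx, hy]

theorem sim_sub_cc {x y : Tm H arH} (h : Sim E S x y) : cc E x y := by
  induction h with
  | rel hx hy => exact (classOf_sound E S hx).trans (classOf_sound E S hy).symm
  | node _ _ _ ih => exact cc.congr ih

theorem classOf_congr_children {g : H} {a b : Fin (arH g) → Tm H arH}
    (h : ∀ i, classOf E S (a i) = classOf E S (b i)) :
    classOf E S (Tm.app g a) = classOf E S (Tm.app g b) := by
  rw [classOf_app, classOf_app]
  have : (fun i => classOf E S (a i)) = fun i => classOf E S (b i) := funext h
  rw [this]

theorem sim_refl : ∀ x : Tm H arH, Sim E S x x := by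
  intro x
  induction x with
  | app g args ih =>
    cases h : classOf E S (Tm.app g args) with
    | none => exact Sim.node ih h h
    | some r => exact Sim.rel h h

theorem sim_symm {x y : Tm H arH} (h : Sim E S x y) : Sim E S y x := by
  induction h with
  | rel hx hy => exact Sim.rel hy hx
  | node _ hx hy ih => exact Sim.node ih hy hx

theorem sim_trans {x y : Tm H arH} (h : Sim E S x y) :
    ∀ {z : Tm H arH}, Sim E S y z → Sim E S x z := by
  induction h with
  | rel hx hy =>
    intro z hyz
    cases hyz with
    | rel hy' hz =>
      have e := hy.symm.trans hy'
      injection e with e'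
      rw [← e'] at hz
      exact Sim.rel hx hz
    | node _ hy' hz => rw [hy'] at hy; exact absurd hy (by simp)
  | node hab hx hy ih =>
    intro z hyz
    cases hyz with
    | rel hy' hz => rw [hy'] at hy; exact absurd hy.symm (by simp)
    | node hbc hy' hz => exact Sim.node (fun i => ih i (hbc i)) hx hz

theorem sim_congr {g : H} {a b : Fin (arH g) → Tm H arH} (h : ∀ i, Sim E S (a i) (b i)) :
    Sim E S (Tm.app g a) (Tm.app g b) := by
  have heq : classOf E S (Tm.app g a) = classOf E S (Tm.app g b) :=
    classOf_congr_children E S fun i => sim_classOf E S (h i)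
  cases hc : classOf E S (Tm.app g a) with
  | none => exact Sim.node h hc (heq ▸ hc)
  | some r => exact Sim.rel hc (heq ▸ hc)

variable (hS : ∀ x y : Tm H arH, Sub x y → y ∈ S → x ∈ S)
variable (hE : ∀ p ∈ E, p.1 ∈ S ∧ p.2 ∈ S)

include hS hE in
theorem cc_sub_sim {x y : Tm H arH} (h : cc E x y) : Sim E S x y := by
  induction h with
  | base hab =>
    rename_i a b
    rcases classOf_mem E S hS (hE _ hab).1 with ⟨ra, hra⟩
    rcases classOf_mem E S hS (hE _ hab).2 with ⟨rb, hrb⟩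
    have e : some ra = some rb := by
      rw [← classOf_pick E S hra, ← classOf_pick E S hrb]
      exact pick_congr E S (cc.base hab)
    have : ra = rb := by injection e
    exact Sim.rel hra (this ▸ hrb)
  | refl a => exact sim_refl E S a
  | symm _ ih => exact sim_symm E S ih
  | trans _ _ ih1 ih2 => exact sim_trans E S ih1 ih2
  | congr _ ih => exact sim_congr E S ih

include hS hE in
/-- Completeness of `classOf`. -/
theorem classOf_complete {z s : Tm H arH} (h : cc E z s) (hs : s ∈ S) :
    ∃ r, classOf E S z = some r ∧ cc E (↑r) s := by
  have hsim : Sim E S z s := cc_sub_sim E S hS hE h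
  rcases classOf_mem E S hS hs with ⟨rs, hrs⟩
  cases hsim with
  | rel hx hy =>
    rename_i r
    exact ⟨r, hx, (classOf_sound E S hy).symm⟩
  | node _ hx hy => rw [hy] at hrs; exact absurd hrs (by simp)

include hS hE in
/-- Determinacy: whether a term is congruent to a fixed element of `S` only
depends on its state. -/
theorem cc_det {x x' t : Tm H arH} (hxx : classOf E S x = classOf E S x') (ht : t ∈ S) :
    cc E x t ↔ cc E x' t := by
  constructor
  · intro h
    rcases classOf_complete E S hS hE h ht with ⟨r, hr, hrt⟩
    rw [hxx] at hr
    exact (classOf_sound E S hr).trans hrt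
  · intro h
    rcases classOf_complete E S hS hE h ht with ⟨r, hr, hrt⟩
    rw [← hxx] at hr
    exact (classOf_sound E S hr).trans hrt

theorem classOf_up {x y : Tm H arH} (h : Sub x y) (hx : classOf E S x = none) :
    classOf E S y = none := by
  induction h with
  | refl => exact hx
  | child g args i _ ih =>
    rw [classOf_app, finSeq_none (fun j => classOf E S (args j)) i ih]
    rfl

theorem sub_inv {x : Tm H arH} {g : H} {args : Fin (arH g) → Tm H arH}
    (h : Sub x (Tm.app g args)) : x = Tm.app g args ∨ ∃ i, Sub x (args i) := by
  cases h with
  | refl => exact Or.inl rfl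
  | child g args i h => exact Or.inr ⟨i, h⟩

include hS hE in
/-- No fresh term is congruent to one of its proper subterms. -/
theorem fresh_no_self_sub : ∀ (n : ℕ) (z : Tm H arH), tsize z ≤ n →
    classOf E S z = none → ∀ w, Sub w z → w ≠ z → ¬ cc E w z := by
  intro n
  induction n with
  | zero =>
    intro z hz
    exfalso
    cases z with
    | app g args =>
      have e : tsize (Tm.app g args) = 1 + ∑ i, tsize (args i) := rfl
      omega
  | succ n ih =>
    intro z hsz hz w hsub hne hcc
    have hsim : Sim E S w z := cc_sub_sim E S hS hE hcc
    cases hsim with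
    | rel hx hy => rw [hy] at hz; exact absurd hz (by simp)
    | node hch hx hy =>
      rename_i g a b
      -- w = .app g a, z = .app g b
      rcases sub_inv hsub with heq | ⟨i, hsub'⟩
      · exact hne heq
      · by_cases hwi : Tm.app g a = b i
        · -- the subterm IS a child: descend inside w = .app g a
          have hccai : cc E (a i) (Tm.app g a) := by
            rw [hwi]; exact sim_sub_cc E S (hch i)
          have hszw : tsize (Tm.app g a) ≤ n := by
            have h1 : tsize (b i) < tsize (Tm.app g b) := tsize_child_lt b i
            rw [← hwi] at h1; omega
          have hsubai : Sub (a i) (Tm.app g a) := Sub.child g a i (Sub.refl _)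
          have hneai : a i ≠ Tm.app g a := by
            intro e
            have := tsize_child_lt a i
            rw [e] at this
            exact lt_irrefl _ this
          exact ih (Tm.app g a) hszw hx (a i) hsubai hneai hccai
        · -- strictly below a child: descend inside b i
          have hccai : cc E (a i) (b i) := sim_sub_cc E S (hch i)
          have hbfresh : classOf E S (b i) = none := classOf_up E S hsub' hx
          have hsubabi : Sub (a i) (b i) :=
            Sub.trans (Sub.child g a i (Sub.refl _)) hsub'
          have hlt : tsize (a i) < tsize (b i) :=
            lt_of_lt_of_le (tsize_child_lt a i) (tsize_le_of_sub hsub')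
          have hneabi : a i ≠ b i := by
            intro e; rw [e] at hlt; exact lt_irrefl _ hlt
          have hszbi : tsize (b i) ≤ n := by
            have := tsize_child_lt b i
            omega
          exact ih (b i) hszbi hbfresh (a i) hsubabi hneabi hccai

/-! ### Replacement map and the freshness lemma -/

variable (u t : Tm H arH)

/-- Replace (bottom-up) every subterm congruent to `u` by `t`. -/
def repl : Tm H arH → Tm H arH
  | .app g args =>
    if cc E (Tm.app g fun i => repl (args i)) u then t
    else Tm.app g fun i => repl (args i)

theorem repl_fix : ∀ {z : Tm H arH}, (∀ w, Sub w z → ¬ cc E w u) → repl E u t z = z := by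
  intro z
  induction z with
  | app g args ih =>
    intro hz
    have hargs : ∀ i, repl E u t (args i) = args i := fun i =>
      ih i fun w hw => hz w (Sub.trans hw (Sub.child g args i (Sub.refl _)))
    show (if cc E (Tm.app g fun i => repl E u t (args i)) u then t
      else Tm.app g fun i => repl E u t (args i)) = Tm.app g args
    have e : (fun i => repl E u t (args i)) = args := funext hargs
    rw [e, if_neg (hz _ (Sub.refl _))]

include hS hE in
theorem repl_rep (hu : classOf E S u = none) :
    ∀ {z : Tm H arH}, cc E z u → repl E u t z = t := by
  intro z hcc
  have hzf : classOf E S z = none := by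
    have hsim : Sim E S z u := cc_sub_sim E S hS hE hcc
    rw [sim_classOf E S hsim]; exact hu
  cases z with
  | app g args =>
    have hargs : ∀ i, repl E u t (args i) = args i := by
      intro i
      refine repl_fix E u t fun w hw hcwu => ?_
      have hwz : cc E w (Tm.app g args) := hcwu.trans hcc.symm
      have hsubwz : Sub w (Tm.app g args) := Sub.trans hw (Sub.child g args i (Sub.refl _))
      have hnewz : w ≠ Tm.app g args := by
        intro e
        have h1 : tsize w ≤ tsize (args i) := tsize_le_of_sub hw
        have h2 := tsize_child_lt args i
        rw [e] at h1; omega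
      exact fresh_no_self_sub E S hS hE (tsize (Tm.app g args)) (Tm.app g args) le_rfl hzf
        w hsubwz hnewz hwz
    show (if cc E (Tm.app g fun i => repl E u t (args i)) u then t
      else Tm.app g fun i => repl E u t (args i)) = t
    have e : (fun i => repl E u t (args i)) = args := funext hargs
    rw [e, if_pos hcc]

include hS hE in
/-- Adding an equation `u = t` for a fresh `u` does not affect congruences between
terms all of whose subterms lie in `S`. -/
theorem fresh_cc_iff (hu : classOf E S u = none) (ht : t ∈ S) {p q : Tm H arH}
    (hp : p ∈ S) (hq : q ∈ S) :
    cc (insert (u, t) E) p q ↔ cc E p q := by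
  have hfreshS : ∀ w ∈ S, ¬ cc E w u := by
    intro w hw hcwu
    rcases classOf_complete E S hS hE hcwu.symm hw with ⟨r, hr, _⟩
    rw [hu] at hr; exact absurd hr.symm (by simp)
  have hfixS : ∀ z ∈ S, repl E u t z = z := fun z hz =>
    repl_fix E u t fun w hw => hfreshS w (hS w z hw hz)
  constructor
  · intro h
    have key : ∀ {x y : Tm H arH}, cc (insert (u, t) E) x y →
        cc E (repl E u t x) (repl E u t y) := by
      intro x y hxy
      induction hxy with
      | base hab =>
        rename_i a b
        rcases Set.mem_insert_iff.1 hab with he | he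
        · rw [Prod.mk.injEq] at he
          rw [he.1, he.2, repl_rep E S hS hE u t hu (cc.refl u), hfixS t ht]
          exact cc.refl t
        · rw [hfixS a (hE _ he).1, hfixS b (hE _ he).2]
          exact cc.base he
      | refl a => exact cc.refl _
      | symm _ ih => exact ih.symm
      | trans _ _ ih1 ih2 => exact ih1.trans ih2
      | congr hcs ih =>
        rename_i g a b
        have hab : cc E (Tm.app g fun i => repl E u t (a i))
            (Tm.app g fun i => repl E u t (b i)) := cc.congr ih
        show cc E (if cc E (Tm.app g fun i => repl E u t (a i)) u then t
            else Tm.app g fun i => repl E u t (a i))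
          (if cc E (Tm.app g fun i => repl E u t (b i)) u then t
            else Tm.app g fun i => repl E u t (b i))
        by_cases c1 : cc E (Tm.app g fun i => repl E u t (a i)) u
        · by_cases c2 : cc E (Tm.app g fun i => repl E u t (b i)) u
          · rw [if_pos c1, if_pos c2]; exact cc.refl t
          · exact absurd (hab.symm.trans c1) c2
        · by_cases c2 : cc E (Tm.app g fun i => repl E u t (b i)) u
          · exact absurd (hab.trans c2) c1
          · rw [if_neg c1, if_neg c2]; exact hab
    have := key h
    rwa [hfixS p hp, hfixS q hq] at this
  · intro h
    exact cc_mono (Set.subset_insert _ _) h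

/-- Two equivalent added equations generate the same closure. -/
theorem cc_insert_congr {a a' t : Tm H arH} (h : cc E a a') {x y : Tm H arH} :
    cc (insert (a, t) E) x y ↔ cc (insert (a', t) E) x y := by
  constructor
  · refine fun hxy => cc_of_gen (fun p hp => ?_) hxy
    rcases Set.mem_insert_iff.1 hp with he | he
    · rw [he]
      show cc (insert (a', t) E) a t
      exact (cc_mono (Set.subset_insert _ _) h).trans
        (cc.base (Set.mem_insert _ _))
    · exact cc.base (Set.mem_insert_iff.2 (Or.inr he))
  · refine fun hxy => cc_of_gen (fun p hp => ?_) hxy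
    rcases Set.mem_insert_iff.1 hp with he | he
    · rw [he]
      show cc (insert (a, t) E) a' t
      exact (cc_mono (Set.subset_insert _ _) h.symm).trans
        (cc.base (Set.mem_insert _ _))
    · exact cc.base (Set.mem_insert_iff.2 (Or.inr he))

theorem cc_insert_swap {a b : Tm H arH} {x y : Tm H arH}
    (h : cc (insert (a, b) E) x y) : cc (insert (b, a) E) x y := by
  refine cc_of_gen (fun p hp => ?_) h
  rcases Set.mem_insert_iff.1 hp with he | he
  · rw [he]
    show cc (insert (b, a) E) a b
    exact (cc.base (Set.mem_insert _ _)).symm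
  · exact cc.base (Set.mem_insert_iff.2 (Or.inr he))

end CCAuto

/-! ### Insert determinacy -/

section InsertDet

variable (E : Set (Tm H arH × Tm H arH)) (S : Set (Tm H arH))
variable (hS : ∀ x y : Tm H arH, Sub x y → y ∈ S → x ∈ S)
variable (hE : ∀ p ∈ E, p.1 ∈ S ∧ p.2 ∈ S)

theorem cc_insert_swap_iff {a b x y : Tm H arH} :
    cc (insert (a, b) E) x y ↔ cc (insert (b, a) E) x y :=
  ⟨cc_insert_swap E, cc_insert_swap E⟩

include hS hE in
theorem insert_det {u u' t p q : Tm H arH} (huu : classOf E S u = classOf E S u')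
    (ht : t ∈ S) (hp : p ∈ S) (hq : q ∈ S) :
    cc (insert (u, t) E) p q ↔ cc (insert (u', t) E) p q := by
  cases hc : classOf E S u with
  | none =>
    rw [hc] at huu
    rw [fresh_cc_iff E S hS hE u t hc ht hp hq,
      fresh_cc_iff E S hS hE u' t huu.symm ht hp hq]
  | some r =>
    have h1 : cc E u ↑r := classOf_sound E S hc
    have h2 : cc E u' ↑r := classOf_sound E S (huu ▸ hc)
    exact cc_insert_congr E (h1.trans h2.symm)

end InsertDet

/-! ### The state of a candidate expression and of literal terms -/

section States

open scoped Classical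

variable (E : Set (Tm H arH × Tm H arH)) (S : Set (Tm H arH)) {k : ℕ}

/-- Transition function on states. -/
def trA (g : H) (q : Fin (arH g) → Option ↥S) : Option ↥S :=
  (finSeq q).bind fun r => pick E S (.app g fun i => ↑(r i))

theorem classOf_trA (g : H) (args : Fin (arH g) → Tm H arH) :
    classOf E S (Tm.app g args) = trA E S g fun i => classOf E S (args i) := rfl

/-- The summary state of a candidate expression with variables: a state transformer. -/
def Gv : Tm (H ⊕ Fin k) (varAr arH k) → ((Fin k → Option ↥S) → Option ↥S)
  | .app (Sum.inl g) args => fun ρ => trA E S g fun i => Gv (args i) ρ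
  | .app (Sum.inr j) _ => fun ρ => ρ j

theorem Gv_inst (σ : Fin k → Tm H arH) :
    ∀ v : Tm (H ⊕ Fin k) (varAr arH k),
      Gv E S v (fun i => classOf E S (σ i)) = classOf E S (Tm.instVars σ v) := by
  intro v
  induction v with
  | app f args ih =>
    cases f with
    | inl g =>
      show trA E S g (fun i => Gv E S (args i) fun j => classOf E S (σ j)) = _
      rw [show Tm.instVars σ (Tm.app (Sum.inl g) args) =
        Tm.app g (fun i => Tm.instVars σ (args i)) from rfl, classOf_trA]
      exact congrArg _ (funext fun i => ih i)
    | inr j => rfl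

/-- The state of a literal term, as a function of the state transformer of `w`. -/
def litG (G : (Fin k → Option ↥S) → Option ↥S) :
    Tm (H ⊕ Unit) (fAr arH k) → Option ↥S
  | .app (Sum.inl g) args => trA E S g fun i => litG G (args i)
  | .app (Sum.inr _) args => G fun i => litG G (args i)

theorem litG_soSubst (v : Tm (H ⊕ Fin k) (varAr arH k)) :
    ∀ m : Tm (H ⊕ Unit) (fAr arH k),
      classOf E S (Tm.soSubst v m) = litG E S (Gv E S v) m := by
  intro m
  induction m with
  | app f args ih =>
    cases f with
    | inl g =>
      show classOf E S (Tm.app g fun i => Tm.soSubst v (args i)) = _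
      rw [classOf_trA]
      show trA E S g _ = trA E S g _
      exact congrArg _ (funext fun i => ih i)
    | inr un =>
      show classOf E S (Tm.instVars (fun i => Tm.soSubst v (args i)) v) = _
      rw [← Gv_inst E S (fun i => Tm.soSubst v (args i)) v]
      show Gv E S v _ = Gv E S v _
      exact congrArg _ (funext fun i => ih i)

end States

/-! ### Erasing `f` from `f`-free terms -/

section EraseF

variable {k : ℕ}

def eraseF : Tm (H ⊕ Unit) (fAr arH k) → Option (Tm H arH)
  | .app (Sum.inl g) args => (finSeq fun i => eraseF (args i)).map (Tm.app g)
  | .app (Sum.inr _) _ => none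

theorem eraseF_soSubst : ∀ {m : Tm (H ⊕ Unit) (fAr arH k)} {x : Tm H arH},
    eraseF m = some x → ∀ v : Tm (H ⊕ Fin k) (varAr arH k), Tm.soSubst v m = x := by
  intro m
  induction m with
  | app f args ih =>
    cases f with
    | inl g =>
      intro x h v
      show Tm.app g (fun i => Tm.soSubst v (args i)) = x
      unfold eraseF at h
      cases hfs : finSeq fun i => eraseF (args i) with
      | none => rw [hfs] at h; simp at h
      | some xs =>
        rw [hfs] at h
        erw [Option.map_some] at h
        have h' : Tm.app g xs = x := by
          cases h; rfl
        rw [← h']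
        exact congrArg _ (funext fun i => ih i (finSeq_eq_some _ _ hfs i) v)
    | inr un => intro x h; unfold eraseF at h; simp at h

theorem countF_eraseF : ∀ {m : Tm (H ⊕ Unit) (fAr arH k)},
    Tm.countF m = 0 → ∃ x, eraseF m = some x := by
  intro m
  induction m with
  | app f args ih =>
    cases f with
    | inl g =>
      intro h
      have h0 : ∀ i, Tm.countF (args i) = 0 := by
        have e : Tm.countF (Tm.app (Sum.inl g) args) = ∑ i, Tm.countF (args i) := rfl
        rw [e] at h
        intro i
        exact Finset.sum_eq_zero_iff.1 h i (Finset.mem_univ i)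
      choose xs hxs using fun i => ih i (h0 i)
      refine ⟨Tm.app g xs, ?_⟩
      unfold eraseF
      have : (fun i => eraseF (args i)) = fun i => some (xs i) := funext hxs
      rw [this, finSeq_some]
      rfl
    | inr un =>
      intro h
      exfalso
      have e : Tm.countF (Tm.app (Sum.inr un) args) = 1 + ∑ i, Tm.countF (args i) := rfl
      omega

end EraseF

/-! ### Clause-level data and the transfer lemma -/

section Clauses

open scoped Classical

variable {k : ℕ}

/-- All subterms of the (erased) `f`-free sides of literals of a clause. -/
def clS (cl : Clause (H ⊕ Unit) (fAr arH k)) : Set (Tm H arH) :=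
  {x | ∃ l ∈ cl, ∃ m x0, (m = l.lhs ∨ m = l.rhs) ∧ eraseF m = some x0 ∧ Sub x x0}

/-- The (erased) equations corresponding to fully `f`-free negative literals. -/
def clE (cl : Clause (H ⊕ Unit) (fAr arH k)) : Set (Tm H arH × Tm H arH) :=
  {p | ∃ l ∈ cl, l.pos = false ∧
    ∃ x y, eraseF l.lhs = some x ∧ eraseF l.rhs = some y ∧ p = (x, y)}

theorem clS_closed (cl : Clause (H ⊕ Unit) (fAr arH k)) :
    ∀ x y : Tm H arH, Sub x y → y ∈ clS cl → x ∈ clS cl := by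
  rintro x y hxy ⟨l, hl, m, x0, hm, he, hsub⟩
  exact ⟨l, hl, m, x0, hm, he, hxy.trans hsub⟩

theorem clE_mem (cl : Clause (H ⊕ Unit) (fAr arH k)) :
    ∀ p ∈ clE cl, p.1 ∈ clS cl ∧ p.2 ∈ clS cl := by
  rintro p ⟨l, hl, hpos, x, y, hx, hy, rfl⟩
  exact ⟨⟨l, hl, l.lhs, x, Or.inl rfl, hx, Sub.refl x⟩,
    ⟨l, hl, l.rhs, y, Or.inr rfl, hy, Sub.refl y⟩⟩

theorem clS_side (cl : Clause (H ⊕ Unit) (fAr arH k)) {l} (hl : l ∈ cl)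
    {m : Tm (H ⊕ Unit) (fAr arH k)} {x : Tm H arH} (hm : m = l.lhs ∨ m = l.rhs)
    (he : eraseF m = some x) : x ∈ clS cl :=
  ⟨l, hl, m, x, hm, he, Sub.refl x⟩

theorem optSubs_finite (o : Option (Tm H arH)) :
    {x : Tm H arH | ∃ x0, o = some x0 ∧ Sub x x0}.Finite := by
  cases o with
  | none =>
    have : {x : Tm H arH | ∃ x0, (none : Option (Tm H arH)) = some x0 ∧ Sub x x0} = ∅ := by
      ext x; simp
    rw [this]; exact Set.finite_empty
  | some x0 =>
    have : {x : Tm H arH | ∃ x1, (some x0 : Option (Tm H arH)) = some x1 ∧ Sub x x1} =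
        {x | Sub x x0} := by
      ext x
      constructor
      · rintro ⟨x1, h1, h2⟩; cases h1; exact h2
      · intro h; exact ⟨x0, rfl, h⟩
    rw [this]; exact finite_subs x0

theorem clS_finite (cl : Clause (H ⊕ Unit) (fAr arH k)) : (clS cl).Finite := by
  have hsub : clS cl ⊆ ⋃ l ∈ {x | x ∈ cl},
      ⋃ m ∈ ({l.lhs, l.rhs} : Set (Tm (H ⊕ Unit) (fAr arH k))),
        {x : Tm H arH | ∃ x0, eraseF m = some x0 ∧ Sub x x0} := by
    rintro x ⟨l, hl, m, x0, hm, he, hs⟩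
    refine Set.mem_biUnion hl (Set.mem_biUnion ?_ ⟨x0, he, hs⟩)
    rcases hm with hm | hm
    · exact Or.inl hm
    · exact Or.inr hm
  refine Set.Finite.subset ?_ hsub
  refine Set.Finite.biUnion cl.finite_toSet fun l _ => ?_
  refine Set.Finite.biUnion ((Set.finite_singleton l.rhs).insert l.lhs) fun m _ =>
    optSubs_finite (eraseF m)

def unitStr : Str H arH where
  D := PUnit
  interp _ _ := PUnit.unit

theorem not_valid_nil : ¬ (Clause.valid ([] : Clause H arH)) := by
  intro h
  rcases h unitStr with ⟨l, hl, _⟩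
  simp at hl

theorem negPairs_soSubst (v : Tm (H ⊕ Fin k) (varAr arH k))
    (cl : Clause (H ⊕ Unit) (fAr arH k)) :
    negPairs (Clause.soSubst v cl) =
      {p | ∃ l ∈ cl, l.pos = false ∧ p = (Tm.soSubst v l.lhs, Tm.soSubst v l.rhs)} := by
  ext p
  constructor
  · rintro ⟨l', hl', hpos, rfl⟩
    rcases List.mem_map.1 hl' with ⟨l, hl, rfl⟩
    exact ⟨l, hl, hpos, rfl⟩
  · rintro ⟨l, hl, hpos, rfl⟩
    exact ⟨Lit.soSubst v l, List.mem_map.2 ⟨l, hl, rfl⟩, hpos, rfl⟩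

theorem valid_soSubst_iff (cl : Clause (H ⊕ Unit) (fAr arH k)) (hnil : cl ≠ [])
    (v : Tm (H ⊕ Fin k) (varAr arH k)) :
    (Clause.soSubst v cl).valid ↔ ∃ l ∈ cl, l.pos = true ∧
      cc (negPairs (Clause.soSubst v cl)) (Tm.soSubst v l.lhs) (Tm.soSubst v l.rhs) := by
  have hnil' : Clause.soSubst v cl ≠ [] := fun h => hnil (List.map_eq_nil_iff.1 h)
  rw [clause_valid_iff (Clause.soSubst v cl) hnil']
  constructor
  · rintro ⟨l', hl', hpos, hcc⟩
    rcases List.mem_map.1 hl' with ⟨l, hl, rfl⟩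
    exact ⟨l, hl, hpos, hcc⟩
  · rintro ⟨l, hl, hpos, hcc⟩
    exact ⟨Lit.soSubst v l, List.mem_map.2 ⟨l, hl, rfl⟩, hpos, hcc⟩

theorem lit_sides (l : Lit ((H ⊕ Unit)) (fAr arH k)) :
    l.countF = l.lhs.countF + l.rhs.countF := rfl

theorem exists_congr_lits {cl : Clause (H ⊕ Unit) (fAr arH k)}
    {P Q : Lit (H ⊕ Unit) (fAr arH k) → Prop}
    (h : ∀ l ∈ cl, l.pos = true → (P l ↔ Q l)) :
    (∃ l ∈ cl, l.pos = true ∧ P l) ↔ (∃ l ∈ cl, l.pos = true ∧ Q l) := by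
  constructor
  · rintro ⟨l, hl, hp, hc⟩; exact ⟨l, hl, hp, (h l hl hp).1 hc⟩
  · rintro ⟨l, hl, hp, hc⟩; exact ⟨l, hl, hp, (h l hl hp).2 hc⟩

/-- The central transfer lemma: for a regular clause, validity of the substituted
clause only depends on the summary state of the substituted expression. -/
theorem clause_transfer (cl : Clause (H ⊕ Unit) (fAr arH k)) (hreg : cl.Regular)
    (v v' : Tm (H ⊕ Fin k) (varAr arH k))
    (hG : Gv (clE cl) (clS cl) v = Gv (clE cl) (clS cl) v') :
    (Clause.soSubst v cl).valid ↔ (Clause.soSubst v' cl).valid := by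
  by_cases hnil : cl = []
  · subst hnil; exact Iff.rfl
  · have hS := clS_closed cl
    have hE := clE_mem cl
    have hstate : ∀ m, classOf (clE cl) (clS cl) (Tm.soSubst v m)
        = classOf (clE cl) (clS cl) (Tm.soSubst v' m) := fun m => by
      rw [litG_soSubst, litG_soSubst, hG]
    rw [valid_soSubst_iff cl hnil v, valid_soSubst_iff cl hnil v']
    cases hreg with
    | inl hc1 =>
      obtain ⟨h1, h2⟩ := hc1
      have hEv : ∀ w : Tm (H ⊕ Fin k) (varAr arH k),
          negPairs (Clause.soSubst w cl) = clE cl := by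
        intro w
        rw [negPairs_soSubst]
        ext p
        constructor
        · rintro ⟨l, hl, hpos, rfl⟩
          have hc0 : l.countF = 0 := h2 l hl hpos
          have h0l : l.lhs.countF = 0 ∧ l.rhs.countF = 0 := by
            have := lit_sides l; omega
          obtain ⟨x, hx⟩ := countF_eraseF h0l.1
          obtain ⟨y, hy⟩ := countF_eraseF h0l.2
          exact ⟨l, hl, hpos, x, y, hx, hy,
            by rw [eraseF_soSubst hx w, eraseF_soSubst hy w]⟩
        · rintro ⟨l, hl, hpos, x, y, hx, hy, rfl⟩
          exact ⟨l, hl, hpos, by rw [eraseF_soSubst hx w, eraseF_soSubst hy w]⟩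
      rw [hEv v, hEv v']
      refine exists_congr_lits fun l hl hp => ?_
      have hle := h1 l hl
      have hsplit : l.lhs.countF = 0 ∨ l.rhs.countF = 0 := by
        have := lit_sides l; omega
      rcases hsplit with h0 | h0
      · obtain ⟨x, hx⟩ := countF_eraseF h0
        have hxS : x ∈ clS cl := clS_side cl hl (Or.inl rfl) hx
        rw [eraseF_soSubst hx v, eraseF_soSubst hx v']
        have hd := cc_det (clE cl) (clS cl) hS hE
          (x := Tm.soSubst v l.rhs) (x' := Tm.soSubst v' l.rhs) (hstate l.rhs) hxS
        exact ⟨fun h => (hd.1 h.symm).symm, fun h => (hd.2 h.symm).symm⟩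
      · obtain ⟨y, hy⟩ := countF_eraseF h0
        have hyS : y ∈ clS cl := clS_side cl hl (Or.inr rfl) hy
        rw [eraseF_soSubst hy v, eraseF_soSubst hy v']
        exact cc_det (clE cl) (clS cl) hS hE (hstate l.lhs) hyS
    | inr hc2 =>
      obtain ⟨h1, h2, h3⟩ := hc2
      obtain ⟨l₀, hf⟩ := List.length_eq_one_iff.1 h3
      have hl₀f : l₀ ∈ cl.filter (fun l => decide (l.pos = false ∧ l.countF ≠ 0)) := by
        rw [hf]; exact List.mem_singleton.2 rfl
      have hl₀ := List.mem_filter.1 hl₀f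
      have hl₀cl : l₀ ∈ cl := hl₀.1
      have hl₀p : l₀.pos = false ∧ l₀.countF ≠ 0 := by simpa using hl₀.2
      have huniq : ∀ l ∈ cl, l.pos = false → l.countF ≠ 0 → l = l₀ := by
        intro l hl hp hc
        have hmem : l ∈ cl.filter (fun l => decide (l.pos = false ∧ l.countF ≠ 0)) :=
          List.mem_filter.2 ⟨hl, by simp [hp, hc]⟩
        rw [hf] at hmem
        simpa using hmem
      have hEv : ∀ w : Tm (H ⊕ Fin k) (varAr arH k),
          negPairs (Clause.soSubst w cl) =
            insert (Tm.soSubst w l₀.lhs, Tm.soSubst w l₀.rhs) (clE cl) := by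
        intro w
        rw [negPairs_soSubst]
        ext p
        constructor
        · rintro ⟨l, hl, hpos, rfl⟩
          by_cases hc0 : l.countF = 0
          · have h0l : l.lhs.countF = 0 ∧ l.rhs.countF = 0 := by
              have := lit_sides l; omega
            obtain ⟨x, hx⟩ := countF_eraseF h0l.1
            obtain ⟨y, hy⟩ := countF_eraseF h0l.2
            refine Set.mem_insert_iff.2 (Or.inr ⟨l, hl, hpos, x, y, hx, hy, ?_⟩)
            rw [eraseF_soSubst hx w, eraseF_soSubst hy w]
          · rw [huniq l hl hpos hc0]
            exact Set.mem_insert _ _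
        · intro hp
          rcases Set.mem_insert_iff.1 hp with he | he
          · rw [he]; exact ⟨l₀, hl₀cl, hl₀p.1, rfl⟩
          · rcases he with ⟨l, hl, hpos, x, y, hx, hy, rfl⟩
            exact ⟨l, hl, hpos, by rw [eraseF_soSubst hx w, eraseF_soSubst hy w]⟩
      rw [hEv v, hEv v']
      refine exists_congr_lits fun l hl hp => ?_
      have hc0 : l.countF = 0 := h2 l hl hp
      have h0l : l.lhs.countF = 0 ∧ l.rhs.countF = 0 := by
        have := lit_sides l; omega
      obtain ⟨x, hx⟩ := countF_eraseF h0l.1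
      obtain ⟨y, hy⟩ := countF_eraseF h0l.2
      have hxS : x ∈ clS cl := clS_side cl hl (Or.inl rfl) hx
      have hyS : y ∈ clS cl := clS_side cl hl (Or.inr rfl) hy
      rw [eraseF_soSubst hx v, eraseF_soSubst hy v',
        eraseF_soSubst hy v, eraseF_soSubst hx v']
      have hle₀ := h1 l₀ hl₀cl
      have hsplit : l₀.lhs.countF = 0 ∨ l₀.rhs.countF = 0 := by
        have := lit_sides l₀; omega
      rcases hsplit with h0 | h0
      · -- lhs of l₀ fixed, rhs varies
        obtain ⟨t, ht⟩ := countF_eraseF h0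
        have htS : t ∈ clS cl := clS_side cl hl₀cl (Or.inl rfl) ht
        rw [eraseF_soSubst ht v, eraseF_soSubst ht v']
        have hd := insert_det (clE cl) (clS cl) hS hE
          (u := Tm.soSubst v l₀.rhs) (u' := Tm.soSubst v' l₀.rhs) (t := t)
          (p := x) (q := y) (hstate l₀.rhs) htS hxS hyS
        exact (cc_insert_swap_iff (clE cl)).trans
          (hd.trans (cc_insert_swap_iff (clE cl)).symm)
      · -- rhs of l₀ fixed, lhs varies
        obtain ⟨t, ht⟩ := countF_eraseF h0
        have htS : t ∈ clS cl := clS_side cl hl₀cl (Or.inr rfl) ht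
        rw [eraseF_soSubst ht v, eraseF_soSubst ht v']
        exact insert_det (clE cl) (clS cl) hS hE (hstate l₀.lhs) htS hxS hyS

end Clauses

/-! ### Grammar states -/

section Grammar

variable {W : Type} {arW : W → ℕ} (G : RTG W arW)

/-- All subterms of ground terms occurring in productions. -/
def gU : Set (Tm W arW) := {x | ∃ p ∈ G.prods, ∃ i w, p.2.2 i = Sum.inr w ∧ Sub x w}

theorem gU_closed : ∀ x y : Tm W arW, Sub x y → y ∈ gU G → x ∈ gU G := by
  rintro x y hxy ⟨p, hp, i, w, hw, hs⟩
  exact ⟨p, hp, i, w, hw, hxy.trans hs⟩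

theorem gU_finite : (gU G).Finite := by
  have hsub : gU G ⊆ ⋃ p ∈ G.prods, ⋃ i,
      {x : Tm W arW | ∃ w, p.2.2 i = Sum.inr w ∧ Sub x w} := by
    rintro x ⟨p, hp, i, w, hw, hs⟩
    exact Set.mem_biUnion hp (Set.mem_iUnion.2 ⟨i, w, hw, hs⟩)
  refine Set.Finite.subset ?_ hsub
  refine Set.Finite.biUnion G.finite_prods fun p _ => Set.finite_iUnion fun i => ?_
  cases ho : p.2.2 i with
  | inl B =>
    refine Set.Finite.subset Set.finite_empty ?_
    rintro x ⟨w, hw, _⟩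
    exact absurd hw (by simp)
  | inr w =>
    refine Set.Finite.subset (finite_subs w) ?_
    rintro x ⟨w1, hw1, hs⟩
    injection hw1 with e
    show Sub x w
    rw [e]
    exact hs

theorem derives_inv {A : G.N} {g : W} {ts : Fin (arW g) → Tm W arW}
    (h : G.Derives A (Tm.app g ts)) :
    ∃ args, (A, ⟨g, args⟩) ∈ G.prods ∧
      (∀ i B, args i = Sum.inl B → G.Derives B (ts i)) ∧
      (∀ i w, args i = Sum.inr w → ts i = w) := by
  cases h with
  | step _ g' args ts' hmem hnt htm => exact ⟨args, hmem, hnt, htm⟩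

/-- The grammar-component of the state of a term. -/
def gstate (t : Tm W arW) : (G.N → Prop) × (↥(gU G) → Prop) :=
  (fun A => G.Derives A t, fun u => t = ↑u)

/-- The grammar-component transition function. -/
def gTrans (g : W) (q : Fin (arW g) → (G.N → Prop) × (↥(gU G) → Prop)) :
    (G.N → Prop) × (↥(gU G) → Prop) :=
  (fun A => ∃ args, (A, ⟨g, args⟩) ∈ G.prods ∧
      ∀ i, (∀ B, args i = Sum.inl B → (q i).1 B) ∧
           (∀ w, args i = Sum.inr w → ∃ h : w ∈ gU G, (q i).2 ⟨w, h⟩),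
   fun u => ∃ us : Fin (arW g) → Tm W arW, ↑u = Tm.app g us ∧
      ∀ i, ∃ h : us i ∈ gU G, (q i).2 ⟨us i, h⟩)

theorem gstate_app (g : W) (ts : Fin (arW g) → Tm W arW) :
    gstate G (Tm.app g ts) = gTrans G g fun i => gstate G (ts i) := by
  unfold gstate gTrans
  refine Prod.ext ?_ ?_
  · funext A
    refine propext ⟨?_, ?_⟩
    · intro h
      rcases derives_inv G h with ⟨args, hmem, hnt, htm⟩
      refine ⟨args, hmem, fun i => ⟨fun B hB => hnt i B hB, fun w hw => ?_⟩⟩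
      exact ⟨⟨_, hmem, i, w, hw, Sub.refl w⟩, htm i w hw⟩
    · rintro ⟨args, hmem, hall⟩
      exact RTG.Derives.step A g args ts hmem (fun i B hB => (hall i).1 B hB)
        (fun i w hw => ((hall i).2 w hw).2)
  · funext u
    refine propext ⟨?_, ?_⟩
    · intro h
      refine ⟨ts, h.symm, fun i => ?_⟩
      have hu : (↑u : Tm W arW) ∈ gU G := u.2
      rw [← h] at hu
      exact ⟨gU_closed G _ _ (Sub.child g ts i (Sub.refl _)) hu, rfl⟩
    · rintro ⟨us, hu, hts⟩
      have h2 : ∀ i, ts i = us i := fun i => (hts i).2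
      show Tm.app g ts = ↑u
      rw [hu]
      exact congrArg _ (funext h2)

end Grammar

/-! ### Assembly of the automaton for the backward direction -/

theorem rename_app {F G : Type} {arF : F → ℕ} {arG : G → ℕ} (h : F → G)
    (hh : ∀ f, arG (h f) = arF f) (f : F) (args : Fin (arF f) → Tm F arF) :
    Tm.rename h hh (Tm.app f args) =
      Tm.app (h f) (fun i => Tm.rename h hh (args (Fin.cast (hh f) i))) := rfl

section Assembly

open scoped Classical

variable {F : Type} {ar : F → ℕ} {k c : ℕ}
variable (φ : RegEUF (F ⊕ Fin c) (Sum.elim ar fun _ => 0) k)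
variable (G : RTG ((F ⊕ Fin c) ⊕ Fin k) (varAr (Sum.elim ar fun _ => 0) k))

def QTy : Type :=
  (∀ i : Fin φ.clauses.length,
    (Fin k → Option ↥(clS (φ.clauses.get i))) → Option ↥(clS (φ.clauses.get i)))
  × ((G.N → Prop) × (↥(gU G) → Prop))

noncomputable instance : Fintype (QTy φ G) := by
  classical
  letI : ∀ i : Fin φ.clauses.length, Fintype ↥(clS (φ.clauses.get i)) :=
    fun i => (clS_finite _).fintype
  letI : Fintype ↥(gU G) := (gU_finite G).fintype
  unfold QTy
  infer_instance

def fullState (t : Tm ((F ⊕ Fin c) ⊕ Fin k) (varAr (Sum.elim ar fun _ => 0) k)) : QTy φ G :=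
  ⟨fun i => Gv (clE (φ.clauses.get i)) (clS (φ.clauses.get i)) t, gstate G t⟩

def backδ : (a : F ⊕ Fin k) → (Fin (varAr ar k a) → QTy φ G) → Option (QTy φ G)
  | Sum.inl g, q => some ⟨fun i ρ => trA (clE (φ.clauses.get i)) (clS (φ.clauses.get i))
      (Sum.inl g) (fun j => (q j).1 i ρ), gTrans G (Sum.inl (Sum.inl g)) (fun j => (q j).2)⟩
  | Sum.inr x, q => some ⟨fun i ρ => ρ x, gTrans G (Sum.inr x) (fun j => (q j).2)⟩

theorem embedW_app_inl (g : F)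
    (args : Fin (varAr ar k (Sum.inl g)) → Tm (F ⊕ Fin k) (varAr ar k)) :
    embedW (c := c) (Tm.app (Sum.inl g) args) =
      Tm.app (Sum.inl (Sum.inl g) : (F ⊕ Fin c) ⊕ Fin k) (fun i => embedW (args i)) := by
  show Tm.rename _ _ _ = _
  rw [rename_app]
  exact congrArg _ (funext fun i =>
    congrArg (Tm.rename _ _) (congrArg args (Fin.ext (by rfl))))

theorem fullState_app (a : F ⊕ Fin k)
    (args : Fin (varAr ar k a) → Tm (F ⊕ Fin k) (varAr ar k)) :
    backδ φ G a (fun i => fullState φ G (embedW (args i)))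
      = some (fullState φ G (embedW (Tm.app a args))) := by
  cases a with
  | inl g =>
    rw [embedW_app_inl]
    refine congrArg some ?_
    unfold fullState
    refine Prod.ext ?_ ?_
    · rfl
    · exact (gstate_app G _ _).symm
  | inr x =>
    show some _ = some (fullState φ G (Tm.rename _ _ _))
    rw [rename_app]
    refine congrArg some ?_
    unfold fullState
    refine Prod.ext ?_ ?_
    · rfl
    · refine Eq.trans ?_ (gstate_app G _ _).symm
      exact congrArg (gTrans G (Sum.inr x)) (funext fun j : Fin 0 => j.elim0)

noncomputable def backDTA : DTA (F ⊕ Fin k) (varAr ar k) where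
  Q := QTy φ G
  fintypeQ := inferInstance
  δ := backδ φ G
  final := {qt | qt.2.1 G.start ∧ ∀ i : Fin φ.clauses.length,
    ∃ v, Gv (clE (φ.clauses.get i)) (clS (φ.clauses.get i)) v = qt.1 i ∧
      (Clause.soSubst v (φ.clauses.get i)).valid}

theorem backDTA_run : ∀ w, (backDTA φ G).run w = some (fullState φ G (embedW w)) := by
  intro w
  induction w with
  | app a args ih =>
    show (finSeq fun i => (backDTA φ G).run (args i)).bind (fun qs => backδ φ G a qs) = _
    have he : (fun i => (backDTA φ G).run (args i))
        = fun i => some (fullState φ G (embedW (args i))) := funext ih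
    rw [he]; erw [finSeq_some]
    erw [Option.bind_some]
    exact fullState_app φ G a args

theorem backDTA_lang (w : Tm (F ⊕ Fin k) (varAr ar k)) :
    w ∈ (backDTA φ G).lang ↔ (embedW w ∈ G.lang ∧ φ.solves (embedW w)) := by
  constructor
  · rintro ⟨q, hq, hrun⟩
    rw [backDTA_run] at hrun
    injection hrun with e
    rw [← e] at hq
    obtain ⟨hst, hall⟩ := hq
    refine ⟨hst, ?_⟩
    intro cl hcl
    rcases List.mem_iff_get.1 hcl with ⟨i, hi⟩
    rcases hall i with ⟨v, hGv, hval⟩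
    have ht := clause_transfer (φ.clauses.get i)
      (φ.regular _ (φ.clauses.get_mem i)) v (embedW w) hGv
    rw [← hi]
    exact ht.1 hval
  · rintro ⟨hlang, hsol⟩
    exact ⟨fullState φ G (embedW w),
      ⟨hlang, fun i => ⟨embedW w, rfl, hsol _ (φ.clauses.get_mem i)⟩⟩,
      backDTA_run φ G w⟩

end Assembly

/-! ### Forward direction: from an automaton to a grammar -/

theorem rename_inj {F G : Type} {arF : F → ℕ} {arG : G → ℕ} {h : F → G}
    (hinj : Function.Injective h) (hh : ∀ f, arG (h f) = arF f) :
    ∀ x y : Tm F arF, Tm.rename h hh x = Tm.rename h hh y → x = y := by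
  intro x
  induction x with
  | app f args ih =>
    intro y e
    cases y with
    | app f' args' =>
      rw [rename_app, rename_app] at e
      have hff : f = f' := hinj (Tm.app_inj_symb e)
      subst hff
      have hargs := Tm.app_inj e
      refine congrArg _ (funext fun j => ?_)
      have hji : Fin.cast (hh f) (Fin.cast (hh f).symm j) = j := Fin.ext (by simp)
      have := congrFun hargs (Fin.cast (hh f).symm j)
      rw [hji] at this
      exact ih j _ this

section Forward

open scoped Classical

variable {F : Type} [Fintype F] {ar : F → ℕ} {k : ℕ}

theorem castPf {c : ℕ} (g : F ⊕ Fin k) :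
    varAr (Sum.elim ar (fun _ => 0) : (F ⊕ Fin c) → ℕ) k (Sum.map Sum.inl id g)
      = varAr ar k g := by cases g <;> rfl

theorem embedW_app {c : ℕ} (g : F ⊕ Fin k)
    (args : Fin (varAr ar k g) → Tm (F ⊕ Fin k) (varAr ar k)) :
    embedW (c := c) (Tm.app g args) =
      Tm.app (Sum.map Sum.inl id g)
        (fun i => embedW (args (Fin.cast (castPf g) i))) := rfl

theorem embedW_inj {c : ℕ} {x y : Tm (F ⊕ Fin k) (varAr ar k)}
    (h : embedW (c := c) x = embedW y) : x = y := by
  refine rename_inj ?_ _ x y h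
  intro a b hab
  cases a <;> cases b <;> simp [Sum.map] at hab <;> simp [hab]

variable (A : DTA (F ⊕ Fin k) (varAr ar k))

def fwdProdSet : Set ((Option A.Q) × Σ g : F ⊕ Fin k, (Fin (varAr ar k g) → A.Q)) :=
  {p | match p.1 with
    | some q => A.δ p.2.1 p.2.2 = some q
    | none => ∃ q' ∈ A.final, A.δ p.2.1 p.2.2 = some q'}

def fwdMap (p : (Option A.Q) × Σ g : F ⊕ Fin k, (Fin (varAr ar k g) → A.Q)) :
    (Option A.Q) × Σ g : (F ⊕ Fin 0) ⊕ Fin k,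
      (Fin (varAr (Sum.elim ar fun _ => 0) k g) →
        Option A.Q ⊕ Tm ((F ⊕ Fin 0) ⊕ Fin k) (varAr (Sum.elim ar fun _ => 0) k)) :=
  (p.1, ⟨Sum.map Sum.inl id p.2.1,
    fun i => Sum.inl (some (p.2.2 (Fin.cast (castPf p.2.1) i)))⟩)

noncomputable def fwdRTG : RTG ((F ⊕ Fin 0) ⊕ Fin k) (varAr (Sum.elim ar fun _ => 0) k) where
  N := Option A.Q
  fintypeN := inferInstance
  start := none
  prods := fwdMap A '' fwdProdSet A
  finite_prods := by
    classical
    exact (Set.toFinite _).image _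

theorem fwd_derives_of_run : ∀ (t : Tm (F ⊕ Fin k) (varAr ar k)) (q : A.Q),
    A.run t = some q → (fwdRTG A).Derives (some q) (embedW t) := by
  intro t
  induction t with
  | app g args ih =>
    intro q hq
    have hq' : (finSeq fun i => A.run (args i)).bind (fun qs => A.δ g qs) = some q := hq
    cases hfs : finSeq fun i => A.run (args i) with
    | none => rw [hfs] at hq'; simp at hq'
    | some qs =>
      rw [hfs] at hq'
      simp only [Option.bind_some] at hq'
      have hps : ((some q, ⟨g, qs⟩) : (Option A.Q) × Σ g : F ⊕ Fin k,
          (Fin (varAr ar k g) → A.Q)) ∈ fwdProdSet A := hq'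
      have hmem : ((some q : Option A.Q), (⟨Sum.map Sum.inl id g,
          fun i => Sum.inl (some (qs (Fin.cast (castPf g) i)))⟩ :
            Σ g' : (F ⊕ Fin 0) ⊕ Fin k,
              (Fin (varAr (Sum.elim ar fun _ => 0) k g') →
                Option A.Q ⊕ Tm ((F ⊕ Fin 0) ⊕ Fin k) (varAr (Sum.elim ar fun _ => 0) k))))
          ∈ (fwdRTG A).prods := by
        show _ ∈ fwdMap A '' fwdProdSet A
        exact ⟨(some q, ⟨g, qs⟩), hps, rfl⟩
      rw [embedW_app]
      refine RTG.Derives.step _ _ _ _ hmem ?_ ?_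
      · intro i B hB
        injection hB with hB'
        rw [← hB']
        exact ih _ _ (finSeq_eq_some _ _ hfs _)
      · intro i u hu
        exact absurd hu (by simp)

theorem fwd_derives_accept (t : Tm (F ⊕ Fin k) (varAr ar k)) (ht : t ∈ A.lang) :
    (fwdRTG A).Derives none (embedW t) := by
  rcases ht with ⟨q, hqf, hrun⟩
  cases t with
  | app g args =>
    have hq' : (finSeq fun i => A.run (args i)).bind (fun qs => A.δ g qs) = some q := hrun
    cases hfs : finSeq fun i => A.run (args i) with
    | none => rw [hfs] at hq'; simp at hq'
    | some qs =>
      rw [hfs] at hq'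
      simp only [Option.bind_some] at hq'
      have hps : ((none, ⟨g, qs⟩) : (Option A.Q) × Σ g : F ⊕ Fin k,
          (Fin (varAr ar k g) → A.Q)) ∈ fwdProdSet A := ⟨q, hqf, hq'⟩
      have hmem : ((none : Option A.Q), (⟨Sum.map Sum.inl id g,
          fun i => Sum.inl (some (qs (Fin.cast (castPf g) i)))⟩ :
            Σ g' : (F ⊕ Fin 0) ⊕ Fin k,
              (Fin (varAr (Sum.elim ar fun _ => 0) k g') →
                Option A.Q ⊕ Tm ((F ⊕ Fin 0) ⊕ Fin k) (varAr (Sum.elim ar fun _ => 0) k))))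
          ∈ (fwdRTG A).prods := by
        show _ ∈ fwdMap A '' fwdProdSet A
        exact ⟨(none, ⟨g, qs⟩), hps, rfl⟩
      rw [embedW_app]
      refine RTG.Derives.step _ _ _ _ hmem ?_ ?_
      · intro i B hB
        injection hB with hB'
        rw [← hB']
        exact fwd_derives_of_run A _ _ (finSeq_eq_some _ _ hfs _)
      · intro i u hu
        exact absurd hu (by simp)

theorem fwd_run_of_derives :
    ∀ (t' : Tm ((F ⊕ Fin 0) ⊕ Fin k) (varAr (Sum.elim ar fun _ => 0) k)) (B : Option A.Q),
    (fwdRTG A).Derives B t' → ∃ t, t' = embedW t ∧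
      ((∀ q, B = some q → A.run t = some q) ∧ (B = none → t ∈ A.lang)) := by
  intro t'
  show ∀ (B : (fwdRTG A).N), _
  intro B h
  induction h with
  | step A' g' pargs ts hmem hnt htm ih =>
    rcases hmem with ⟨p, hp, he⟩
    rcases p with ⟨oq, g0, qs⟩
    have hA' : oq = A' := congrArg Prod.fst he
    subst hA'
    have hsig := congrArg Prod.snd he
    simp only [fwdMap] at hsig
    obtain ⟨hg, hargs⟩ := Sigma.mk.inj_iff.1 hsig
    subst hg
    have hpargs := eq_of_heq hargs
    subst hpargs
    have hcast : ∀ j : Fin (varAr ar k g0),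
        Fin.cast (castPf (c := 0) g0) (Fin.cast (castPf (c := 0) g0).symm j) = j := fun j => Fin.ext (by simp)
    have hch : ∀ j : Fin (varAr ar k g0), ∃ t,
        ts (Fin.cast (castPf (c := 0) g0).symm j) = embedW t ∧ A.run t = some (qs j) := by
      intro j
      have hpj : (fun i => (Sum.inl (some (qs (Fin.cast (castPf (c := 0) g0) i))) :
          Option A.Q ⊕ Tm ((F ⊕ Fin 0) ⊕ Fin k) (varAr (Sum.elim ar fun _ => 0) k)))
            (Fin.cast (castPf (c := 0) g0).symm j) = Sum.inl (some (qs j)) :=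
        congrArg (fun z : Fin (varAr ar k g0) => (Sum.inl (some (qs z)) :
          Option A.Q ⊕ Tm ((F ⊕ Fin 0) ⊕ Fin k) (varAr (Sum.elim ar fun _ => 0) k)))
          (hcast j)
      rcases ih (Fin.cast (castPf (c := 0) g0).symm j) (some (qs j)) hpj with ⟨t, hts, himp, _⟩
      exact ⟨t, hts, himp _ rfl⟩
    choose t0 ht0 hrun0 using hch
    have hterm : Tm.app (Sum.map Sum.inl id g0) ts = embedW (Tm.app g0 t0) := by
      rw [embedW_app]
      refine congrArg _ (funext fun i => ?_)
      have := ht0 (Fin.cast (castPf (c := 0) g0) i)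
      have hci : Fin.cast (castPf (c := 0) g0).symm (Fin.cast (castPf (c := 0) g0) i) = i := Fin.ext (by simp)
      rw [hci] at this
      exact this
    have hrunfull : A.run (Tm.app g0 t0) = A.δ g0 qs := by
      show (finSeq fun i => A.run (t0 i)).bind (fun qs' => A.δ g0 qs') = A.δ g0 qs
      have : (fun i => A.run (t0 i)) = fun i => some (qs i) := funext hrun0
      rw [this, finSeq_some]
      simp only [Option.bind_some]
    refine ⟨Tm.app g0 t0, hterm, ?_, ?_⟩
    · intro q hq
      cases oq with
      | some q' =>
        injection hq with hq'
        subst hq'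
        rw [hrunfull]
        exact hp
      | none => exact absurd hq (by simp)
    · intro hq
      cases oq with
      | some q' => exact absurd hq (by simp)
      | none =>
        rcases hp with ⟨q', hq'f, hq'δ⟩
        exact ⟨q', hq'f, by rw [hrunfull]; exact hq'δ⟩

end Forward

end SyGuSProof

end Dev

/-- A tree language `L ⊆ T(Σ, {x₁,…,x_k})` is regular if and only if it
is the solution set of a regular SyGuS-EUF problem: there are a finite extension `Σ'` of
`Σ` by constants, a regular-EUF formula `φ` over `Σ' ∪ {f}` with `f` of arity `k`, and a
`Σ'`-compatible regular tree grammar `G` generating only terms of `T(Σ, {x₁,…,x_k})`,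
such that `L = {w ∈ L(G) : φ{w/f} is valid}`. -/
theorem regular_iff_solution_set_of_regular_sygus_euf {F : Type} [Fintype F]
    (ar : F → ℕ) (k : ℕ) (L : Set (Tm (F ⊕ Fin k) (varAr ar k))) :
    IsRegularTreeLang L ↔
      ∃ (c : ℕ) (φ : RegEUF (F ⊕ Fin c) (Sum.elim ar fun _ => 0) k)
        (G : RTG ((F ⊕ Fin c) ⊕ Fin k) (varAr (Sum.elim ar fun _ => 0) k)),
        G.lang ⊆ Set.range (embedW (F := F) (ar := ar) (k := k) (c := c)) ∧
        L = {w : Tm (F ⊕ Fin k) (varAr ar k) |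
              embedW w ∈ G.lang ∧ φ.solves (embedW w)} := by
  constructor
  · rintro ⟨A, rfl⟩
    refine ⟨0, ⟨[], fun cl hcl => absurd hcl (List.not_mem_nil (a := cl))⟩,
      SyGuSProof.fwdRTG A, ?_, ?_⟩
    · intro t' ht'
      rcases SyGuSProof.fwd_run_of_derives A t' none ht' with ⟨t, rfl, -⟩
      exact ⟨t, rfl⟩
    · ext w
      simp only [Set.mem_setOf_eq]
      constructor
      · intro hw
        exact ⟨SyGuSProof.fwd_derives_accept A w hw,
          fun cl hcl => absurd hcl (List.not_mem_nil (a := cl))⟩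
      · rintro ⟨hl, -⟩
        rcases SyGuSProof.fwd_run_of_derives A _ none hl with ⟨t, he, -, himp⟩
        have hw : w = t := SyGuSProof.embedW_inj he
        rw [hw]
        exact himp rfl
  · rintro ⟨c, φ, G, -, hL⟩
    refine ⟨SyGuSProof.backDTA φ G, ?_⟩
    rw [hL]
    ext w
    exact (SyGuSProof.backDTA_lang φ G w).symm

end SyGuS
end

section
/- Let T be a finite alphabet, n ≥ 1, and c : T → (Fin n → Bool) an injective fixed-length encoding; extend c letterwise to ĉ : List T → List Bool by concatenating the n-bit blocks. For every context-free grammar G over terminal alphabet T with no ε-productions (every production has a nonempty right-hand side), there exists a regular tree grammar G′ over the ranked alphabet {@ : 2, 0 : 0, 1 : 0} such that {⟦t⟧ : t ∈ L(G′)} = {ĉ(w) : w ∈ L(G)}. Consequently, for two such context-free grammars G1 and G2 with corresponding tree grammars G1′ and G2′: L(G1) ∩ L(G2) ≠ ∅ if and only if there exist t1 ∈ L(G1′) and t2 ∈ L(G2′) with ⟦t1⟧ = ⟦t2⟧. -/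
namespace SyGuS

/-- The ranked alphabet `{@ : 2, 0 : 0, 1 : 0}` of bitstring trees. -/
inductive Sym3 : Type
  | cat | b0 | b1
  deriving DecidableEq

instance : Fintype Sym3 := ⟨{Sym3.cat, Sym3.b0, Sym3.b1}, by intro s; cases s <;> simp⟩

def ar3 : Sym3 → ℕ
  | .cat => 2
  | .b0 => 0
  | .b1 => 0

/-- The structure of bitstrings: `⟦0⟧ = [false]`, `⟦1⟧ = [true]`,
`⟦t₁ @ t₂⟧ = ⟦t₁⟧ ++ ⟦t₂⟧`. -/
def bitStr : Str Sym3 ar3 where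
  D := List Bool
  nonemptyD := inferInstance
  interp
    | .cat => fun v => v ⟨0, by decide⟩ ++ v ⟨1, by decide⟩
    | .b0 => fun _ => [false]
    | .b1 => fun _ => [true]

/-- Evaluation `⟦·⟧` of a bitstring tree. -/
def beval (t : Tm Sym3 ar3) : List Bool := t.eval bitStr

/-- The letterwise extension `ĉ` of the fixed-length encoding `c`. -/
def chat {T : Type} (n : ℕ) (c : T → (Fin n → Bool)) (w : List T) : List Bool :=
  w.flatMap fun t => List.ofFn (c t)

/-- The tree grammar `G'` corresponds to the context-free grammar `G` (under the
encoding `c`): the bitstrings denoted by the trees of `L(G')` are exactly the encodings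
of the words of `L(G)`. -/
def Corresponds {T : Type} (n : ℕ) (c : T → (Fin n → Bool))
    (G : ContextFreeGrammar T) (G' : RTG Sym3 ar3) : Prop :=
  beval '' G'.lang = chat n c '' G.language

section Aux

/-! ### Bitstring tree helpers -/

def bitTm : Bool → Tm Sym3 ar3
  | false => .app .b0 ![]
  | true => .app .b1 ![]

lemma beval_bitTm (b : Bool) : beval (bitTm b) = [b] := by cases b <;> rfl

lemma beval_cat (v : Fin 2 → Tm Sym3 ar3) :
    beval (.app .cat v) = beval (v 0) ++ beval (v 1) := rfl

def listTm : Bool → List Bool → Tm Sym3 ar3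
  | b, [] => bitTm b
  | b, x :: l => .app .cat ![bitTm b, listTm x l]

lemma beval_listTm (b : Bool) (l : List Bool) : beval (listTm b l) = b :: l := by
  induction l generalizing b with
  | nil => simp [listTm, beval_bitTm]
  | cons x l ih => simp [listTm, beval_cat, beval_bitTm, ih]

def tmOf : List Bool → Tm Sym3 ar3
  | [] => bitTm false
  | b :: l => listTm b l

lemma beval_tmOf {l : List Bool} (h : l ≠ []) : beval (tmOf l) = l := by
  cases l with
  | nil => exact absurd rfl h
  | cons b l => simp [tmOf, beval_listTm]

def foldTm : Tm Sym3 ar3 → List (Tm Sym3 ar3) → Tm Sym3 ar3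
  | t, [] => t
  | t, u :: l => .app .cat ![t, foldTm u l]

lemma beval_foldTm (t : Tm Sym3 ar3) (l : List (Tm Sym3 ar3)) :
    beval (foldTm t l) = beval t ++ (l.map beval).flatten := by
  induction l generalizing t with
  | nil => simp [foldTm]
  | cons u l ih => simp [foldTm, beval_cat, ih]

/-! ### chat helpers -/

lemma chat_append {T : Type} (n : ℕ) (c : T → Fin n → Bool) (w₁ w₂ : List T) :
    chat n c (w₁ ++ w₂) = chat n c w₁ ++ chat n c w₂ := by
  simp [chat]

lemma chat_singleton {T : Type} (n : ℕ) (c : T → Fin n → Bool) (a : T) :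
    chat n c [a] = List.ofFn (c a) := by
  simp [chat]

lemma chat_nil {T : Type} (n : ℕ) (c : T → Fin n → Bool) : chat n c [] = [] := rfl

lemma ofFn_ne_nil {T : Type} {n : ℕ} (hn : 1 ≤ n) (c : T → Fin n → Bool) (a : T) :
    List.ofFn (c a) ≠ [] := by
  intro h
  have := congrArg List.length h
  simp at this
  omega

lemma chat_injective {T : Type} {n : ℕ} (hn : 1 ≤ n) {c : T → Fin n → Bool}
    (hc : Function.Injective c) : Function.Injective (chat n c) := by
  intro w₁ w₂ h
  induction w₁ generalizing w₂ with
  | nil =>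
    cases w₂ with
    | nil => rfl
    | cons b w₂ =>
      exfalso
      have : chat n c (b :: w₂) = [] := h.symm
      rw [show b :: w₂ = [b] ++ w₂ from rfl, chat_append, chat_singleton] at this
      exact ofFn_ne_nil hn c b (List.append_eq_nil_iff.mp this).1
  | cons a w₁ ih =>
    cases w₂ with
    | nil =>
      exfalso
      have : chat n c (a :: w₁) = [] := h
      rw [show a :: w₁ = [a] ++ w₁ from rfl, chat_append, chat_singleton] at this
      exact ofFn_ne_nil hn c a (List.append_eq_nil_iff.mp this).1
    | cons b w₂ =>
      rw [show a :: w₁ = [a] ++ w₁ from rfl, show b :: w₂ = [b] ++ w₂ from rfl,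
        chat_append, chat_append, chat_singleton, chat_singleton] at h
      obtain ⟨h1, h2⟩ := List.append_inj h (by simp)
      have hab : a = b := hc (List.ofFn_injective h1)
      rw [hab, ih h2]

end Aux
section CFGAux

open ContextFreeGrammar

universe u
variable {T : Type} {g : ContextFreeGrammar.{0} T}

/-- Counted derivations. -/
inductive DerN (g : ContextFreeGrammar.{0} T) :
    ℕ → List (Symbol T g.NT) → List (Symbol T g.NT) → Prop
  | refl (u : List (Symbol T g.NT)) : DerN g 0 u u
  | head {k u v w} (h : g.Produces u v) (h' : DerN g k v w) : DerN g (k + 1) u w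

lemma DerN.derives {k u v} (h : DerN g k u v) : g.Derives u v := by
  induction h with
  | refl => rfl
  | head h _ ih => exact h.trans_derives ih

lemma derN_of_derives {u v} (h : g.Derives u v) : ∃ k, DerN g k u v := by
  induction h using Relation.ReflTransGen.head_induction_on with
  | refl => exact ⟨0, .refl _⟩
  | head h _ ih => obtain ⟨k, hk⟩ := ih; exact ⟨k + 1, .head h hk⟩

lemma DerN.append_split : ∀ {k y x}, DerN g k y x → ∀ u v, y = u ++ v →
    ∃ k₁ k₂ x₁ x₂, k₁ + k₂ = k ∧ x = x₁ ++ x₂ ∧ DerN g k₁ u x₁ ∧ DerN g k₂ v x₂ := by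
  intro k y x h
  induction h with
  | refl y => rintro u v rfl; exact ⟨0, 0, u, v, rfl, rfl, .refl u, .refl v⟩
  | @head k y z x hp _ ih =>
    rintro u v rfl
    obtain ⟨r, hr, hrw⟩ := hp
    obtain ⟨p, q, hin, hout⟩ := hrw.exists_parts
    rw [List.append_assoc] at hin
    rcases List.append_eq_append_iff.mp hin with ⟨a', ha1, ha2⟩ | ⟨c', hc1, hc2⟩
    · -- v contains the nonterminal: v = a' ++ [nt] ++ q, p = u ++ a'
      have hv' : z = u ++ (a' ++ r.output ++ q) := by
        rw [hout, ha1]; simp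
      obtain ⟨k₁, k₂, x₁, x₂, hk, hx, h1, h2⟩ := ih u (a' ++ r.output ++ q) hv'
      refine ⟨k₁, k₂ + 1, x₁, x₂, by omega, hx, h1, .head ⟨r, hr, ?_⟩ h2⟩
      rw [ha2, ← List.append_assoc]
      exact r.rewrites_of_exists_parts a' q
    · -- u = p ++ c', [nt] ++ q = c' ++ v
      cases c' with
      | nil =>
        -- u = p, v = [nt] ++ q
        have hv' : z = u ++ (r.output ++ q) := by
          rw [hout, hc1]; simp
        obtain ⟨k₁, k₂, x₁, x₂, hk, hx, h1, h2⟩ := ih u (r.output ++ q) hv'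
        refine ⟨k₁, k₂ + 1, x₁, x₂, by omega, hx, h1, .head ⟨r, hr, ?_⟩ h2⟩
        have : v = [Symbol.nonterminal r.input] ++ q := by simpa using hc2.symm
        rw [this]
        simpa using r.rewrites_of_exists_parts [] q
      | cons c0 c'' =>
        have hc0 : c0 = Symbol.nonterminal r.input ∧ q = c'' ++ v := by
          constructor
          · have := congrArg (fun l => l.head?) hc2
            simpa using this.symm
          · have := congrArg List.tail hc2
            simpa using this
        obtain ⟨rfl, rfl⟩ := hc0
        have hu' : z = (p ++ r.output ++ c'') ++ v := by rw [hout]; simp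
        obtain ⟨k₁, k₂, x₁, x₂, hk, hx, h1, h2⟩ := ih (p ++ r.output ++ c'') v hu'
        refine ⟨k₁ + 1, k₂, x₁, x₂, by omega, hx, .head ⟨r, hr, ?_⟩ h1, h2⟩
        rw [hc1]
        simpa using r.rewrites_of_exists_parts p c''
  
/-- No derivation step is possible from a string of terminals. -/
lemma DerN.terminal_eq : ∀ {k w x}, DerN g k (List.map Symbol.terminal w) x →
    x = List.map Symbol.terminal w := by
  intro k w x h
  cases h with
  | refl => rfl
  | head hp h' =>
    exfalso
    obtain ⟨r, hr, hrw⟩ := hp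
    obtain ⟨p, q, hin, -⟩ := hrw.exists_parts
    have : Symbol.nonterminal r.input ∈ List.map Symbol.terminal w := by
      rw [hin]; simp
    simp at this

/-- Unit-chain relation. -/
def UnitRel (g : ContextFreeGrammar.{0} T) (A B : g.NT) : Prop :=
  ∃ r ∈ g.rules, r.input = A ∧ r.output = [Symbol.nonterminal B]

abbrev UChain (g : ContextFreeGrammar.{0} T) : g.NT → g.NT → Prop :=
  Relation.ReflTransGen (UnitRel g)

lemma UChain.derives {A B : g.NT} (h : UChain g A B) :
    g.Derives [Symbol.nonterminal A] [Symbol.nonterminal B] := by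
  induction h with
  | refl => rfl
  | tail _ hstep ih =>
    obtain ⟨r, hr, hin, hout⟩ := hstep
    refine ih.trans_produces ⟨r, hr, ?_⟩
    rw [← hin, ← hout]
    exact ContextFreeRule.Rewrites.input_output

lemma derives_concat {s : Symbol T g.NT} {β : List (Symbol T g.NT)} {w₀ w₁ : List T}
    (h₀ : g.Derives [s] (List.map Symbol.terminal w₀))
    (h₁ : g.Derives β (List.map Symbol.terminal w₁)) :
    g.Derives (s :: β) (List.map Symbol.terminal (w₀ ++ w₁)) := by
  have h0' := h₀.append_right β
  have h1' := h₁.append_left (List.map Symbol.terminal w₀)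
  simpa using h0'.trans h1'

end CFGAux
section Construction

open ContextFreeGrammar

universe u
variable {T : Type} {g : ContextFreeGrammar.{0} T} {n m K : ℕ}

/-- Nonterminals of the tree grammar. -/
def NTy (m : ℕ) {K : ℕ} (rl : Fin K → ContextFreeRule T g.NT) : Type :=
  Fin m ⊕ Σ j : Fin K, Fin ((rl j).output.length)

instance (rl : Fin K → ContextFreeRule T g.NT) : Fintype (NTy m rl) := by
  unfold NTy; infer_instance

/-- Right-hand sides of tree-grammar productions. -/
abbrev RHS (m : ℕ) {K : ℕ} (rl : Fin K → ContextFreeRule T g.NT) : Type :=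
  Σ s : Sym3, Fin (ar3 s) → (NTy m rl ⊕ Tm Sym3 ar3)

/-- The production rhs generating exactly the ground term `u`. -/
def headProd (rl : Fin K → ContextFreeRule T g.NT) : Tm Sym3 ar3 → RHS m rl
  | .app f us => ⟨f, fun i => Sum.inr (us i)⟩

/-- The tree-grammar argument corresponding to a grammar symbol. -/
def symArg (c : T → Fin n → Bool) (e : g.NT ≃ Fin m) (rl : Fin K → ContextFreeRule T g.NT) :
    Symbol T g.NT → (NTy m rl ⊕ Tm Sym3 ar3)
  | .terminal a => Sum.inr (tmOf (List.ofFn (c a)))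
  | .nonterminal B => Sum.inl (Sum.inl (e B))

/-- The production rhs of the `i`-th suffix of rule `j` (if any). -/
def rhsOf (c : T → Fin n → Bool) (e : g.NT ≃ Fin m) (rl : Fin K → ContextFreeRule T g.NT)
    (j : Fin K) (i : ℕ) : Option (RHS m rl) :=
  match h : (rl j).output.drop i with
  | [] => none
  | [.terminal a] => some (headProd rl (tmOf (List.ofFn (c a))))
  | [.nonterminal _] => none
  | s :: _ :: _ =>
    some ⟨.cat, ![symArg c e rl s, Sum.inl (Sum.inr ⟨j, ⟨i + 1, by
      have hlen := congrArg List.length h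
      simp at hlen
      omega⟩⟩)]⟩

/-- When the tree-grammar nonterminal `X` is supposed to simulate grammar nonterminal `B`. -/
def SimLHS (e : g.NT ≃ Fin m) (rl : Fin K → ContextFreeRule T g.NT) :
    NTy m rl → g.NT → Prop
  | .inl v, B => v = e B
  | .inr ⟨j, i⟩, B => (rl j).output.drop i = [Symbol.nonterminal B]

/-- The sentential form represented by a tree-grammar nonterminal. -/
def SemForm (e : g.NT ≃ Fin m) (rl : Fin K → ContextFreeRule T g.NT) :
    NTy m rl → List (Symbol T g.NT)
  | .inl v => [Symbol.nonterminal (e.symm v)]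
  | .inr ⟨j, i⟩ => (rl j).output.drop i

/-- Productions of the tree grammar. -/
def prodsOf (c : T → Fin n → Bool) (e : g.NT ≃ Fin m) (rl : Fin K → ContextFreeRule T g.NT) :
    Set (NTy m rl × RHS m rl) :=
  { q | (∃ B j, SimLHS e rl q.1 B ∧ UChain g B (rl j).input ∧ rhsOf c e rl j 0 = some q.2) ∨
        (∃ (j : Fin K) (i : Fin ((rl j).output.length)),
          q.1 = Sum.inr ⟨j, i⟩ ∧ rhsOf c e rl j i = some q.2) }

lemma prodsOf_finite (c : T → Fin n → Bool) (e : g.NT ≃ Fin m)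
    (rl : Fin K → ContextFreeRule T g.NT) : (prodsOf c e rl).Finite := by
  classical
  have hS : { p : RHS m rl | ∃ (q : Σ j : Fin K, Fin ((rl j).output.length + 1)),
      rhsOf c e rl q.1 q.2 = some p }.Finite := by
    have := Set.finite_range (fun q : Σ j : Fin K, Fin ((rl j).output.length + 1) =>
      rhsOf c e rl q.1 q.2)
    have hsub : { p : RHS m rl | ∃ (q : Σ j : Fin K, Fin ((rl j).output.length + 1)),
        rhsOf c e rl q.1 q.2 = some p } ⊆
        Option.some ⁻¹' (Set.range fun q : Σ j : Fin K, Fin ((rl j).output.length + 1) =>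
          rhsOf c e rl q.1 q.2) := by
      rintro p ⟨q, hq⟩
      exact ⟨q, hq⟩
    exact (this.preimage (Option.some_injective _).injOn).subset hsub
  refine (Set.Finite.prod (Set.finite_univ (α := NTy m rl)) hS).subset ?_
  rintro ⟨X, p⟩ (⟨B, j, _, _, hrhs⟩ | ⟨j, i, _, hrhs⟩)
  · exact ⟨trivial, ⟨j, ⟨0, by omega⟩⟩, hrhs⟩
  · exact ⟨trivial, ⟨j, ⟨i, by omega⟩⟩, hrhs⟩

/-- The regular tree grammar associated with an (indexed) context-free grammar. -/
def rtgOf (c : T → Fin n → Bool) (e : g.NT ≃ Fin m) (rl : Fin K → ContextFreeRule T g.NT) :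
    RTG Sym3 ar3 where
  N := NTy m rl
  start := Sum.inl (e g.initial)
  prods := prodsOf c e rl
  finite_prods := prodsOf_finite c e rl

end Construction
section Correctness

open ContextFreeGrammar

universe u
variable {T : Type} {g : ContextFreeGrammar.{0} T} {n m K : ℕ}
variable {c : T → Fin n → Bool} {e : g.NT ≃ Fin m} {rl : Fin K → ContextFreeRule T g.NT}

lemma rhsOf_cases {j : Fin K} {i : ℕ} {p : RHS m rl} (h : rhsOf c e rl j i = some p) :
    (∃ a, (rl j).output.drop i = [Symbol.terminal a] ∧
      p = headProd rl (tmOf (List.ofFn (c a)))) ∨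
    (∃ s s' tl, (rl j).output.drop i = s :: s' :: tl ∧
      ∃ (hlt : i + 1 < (rl j).output.length),
        p = ⟨.cat, ![symArg c e rl s, Sum.inl (Sum.inr ⟨j, ⟨i + 1, hlt⟩⟩)]⟩) := by
  unfold rhsOf at h
  split at h
  · exact absurd h (by simp)
  · left
    exact ⟨_, by assumption, by injection h with h; exact h.symm⟩
  · exact absurd h (by simp)
  · right
    rename_i s b tl heq
    have hlen := congrArg List.length heq
    simp at hlen
    refine ⟨s, b, tl, heq, by omega, ?_⟩
    injection h with h
    exact h.symm

lemma rhsOf_eq_terminal {j : Fin K} {i : ℕ} {a : T}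
    (h : (rl j).output.drop i = [Symbol.terminal a]) :
    rhsOf c e rl j i = some (headProd rl (tmOf (List.ofFn (c a)))) := by
  unfold rhsOf
  split <;> simp_all

lemma rhsOf_eq_long {j : Fin K} {i : ℕ} {s s' : Symbol T g.NT} {tl : List (Symbol T g.NT)}
    (h : (rl j).output.drop i = s :: s' :: tl) (hlt : i + 1 < (rl j).output.length) :
    rhsOf c e rl j i =
      some ⟨.cat, ![symArg c e rl s, Sum.inl (Sum.inr ⟨j, ⟨i + 1, hlt⟩⟩)]⟩ := by
  unfold rhsOf
  split <;> simp_all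

lemma simLHS_derives {X : NTy m rl} {B : g.NT} (h : SimLHS e rl X B) :
    g.Derives (SemForm e rl X) [Symbol.nonterminal B] := by
  cases X with
  | inl v =>
    have : v = e B := h
    subst this
    simp only [SemForm, Equiv.symm_apply_apply]
    rfl
  | inr ji =>
    obtain ⟨j, i⟩ := ji
    have : (rl j).output.drop ↑i = [Symbol.nonterminal B] := h
    rw [SemForm, this]

/-- A nonterminal with a `headProd u` production derives `u`. -/
lemma derives_headProd {X : NTy m rl} {u : Tm Sym3 ar3}
    (h : (X, headProd rl u) ∈ prodsOf c e rl) : (rtgOf c e rl).Derives X u := by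
  cases u with
  | app f us =>
    have h' : (X, (⟨f, fun i => Sum.inr (us i)⟩ : RHS m rl)) ∈ (rtgOf c e rl).prods := h
    refine RTG.Derives.step (G := rtgOf c e rl) X f (fun i => Sum.inr (us i)) us h' ?_ ?_
    · intro i B hB; exact absurd hB (by simp)
    · intro i u' hu'
      exact Sum.inr.inj hu'

/-- Lifting a derivation along unit chains / simulation. -/
lemma derives_lift {X : NTy m rl} {B B' : g.NT} {t : Tm Sym3 ar3}
    (hsim : SimLHS e rl X B) (hch : UChain g B B')
    (h : (rtgOf c e rl).Derives (Sum.inl (e B')) t) : (rtgOf c e rl).Derives X t := by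
  obtain ⟨Y, hY⟩ : ∃ Y : (rtgOf c e rl).N, Y = Sum.inl (e B') := ⟨_, rfl⟩
  rw [← hY] at h
  cases h with
  | step _ gs args ts hmem hnt htm =>
    subst hY
    rcases hmem with ⟨B₀, j, hs₀, hch₀, hrhs⟩ | ⟨j, i, hX, -⟩
    · have hBB : B' = B₀ := e.injective hs₀
      subst hBB
      exact RTG.Derives.step X gs args ts (Or.inl ⟨B, j, hsim, hch.trans hch₀, hrhs⟩) hnt htm
    · exact absurd hX (by simp)

end Correctness
section Soundness

open ContextFreeGrammar

universe u
variable {T : Type} {g : ContextFreeGrammar.{0} T} {n m K : ℕ}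
variable {c : T → Fin n → Bool} {e : g.NT ≃ Fin m} {rl : Fin K → ContextFreeRule T g.NT}

lemma rtg_sound (hn : 1 ≤ n) (hrl : ∀ j, rl j ∈ g.rules) {X : (rtgOf c e rl).N} {t : Tm Sym3 ar3}
    (h : (rtgOf c e rl).Derives X t) :
    ∃ w, g.Derives (SemForm e rl X) (List.map Symbol.terminal w) ∧ beval t = chat n c w := by
  induction h with
  | step X gs args ts hmem hnt htm ih =>
    have key : ∀ (j : Fin K) (i : ℕ),
        g.Derives (SemForm e rl X) ((rl j).output.drop i) →
        rhsOf c e rl j i = some ⟨gs, args⟩ →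
        ∃ w, g.Derives (SemForm e rl X) (List.map Symbol.terminal w) ∧
          beval (.app gs ts) = chat n c w := by
      intro j i hd hrhs
      rcases rhsOf_cases hrhs with ⟨a, hdrop, hp⟩ | ⟨s, s', tl, hdrop, hlt, hp⟩
      · -- single terminal suffix
        refine ⟨[a], hd.trans ?_, ?_⟩
        · rw [hdrop]
          simp only [List.map_cons, List.map_nil]
          rfl
        · have hne := ofFn_ne_nil hn c a
          cases hu : tmOf (List.ofFn (c a)) with
          | app f us =>
            rw [hu] at hp
            rw [show headProd rl (Tm.app f us) = ⟨f, fun i => Sum.inr (us i)⟩ from rfl] at hp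
            injection hp with h1 h2
            subst h1
            have hargs := eq_of_heq h2
            have hts : ts = us := by
              funext i2
              exact htm i2 (us i2) (by rw [hargs]; rfl)
            rw [hts, ← hu, beval_tmOf hne, chat_singleton]
      · -- long suffix
        injection hp with h1 h2
        subst h1
        have hargs := eq_of_heq h2
        have harg0 : args (0 : Fin 2) = symArg c e rl s := by
          rw [hargs]; simp; rfl
        have harg1 : args (1 : Fin 2) = Sum.inl (Sum.inr ⟨j, ⟨i + 1, hlt⟩⟩) := by
          rw [hargs]; simp; rfl
        -- child 0
        have hchild0 : ∃ w₀, g.Derives [s] (List.map Symbol.terminal w₀) ∧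
            beval (ts (0 : Fin 2)) = chat n c w₀ := by
          cases s with
          | terminal a =>
            refine ⟨[a], by simp only [List.map_cons, List.map_nil]; rfl, ?_⟩
            have hts0 : ts (0 : Fin 2) = tmOf (List.ofFn (c a)) :=
              htm (0 : Fin 2) _ (by rw [harg0]; rfl)
            rw [hts0, beval_tmOf (ofFn_ne_nil hn c a), chat_singleton]
          | nonterminal B =>
            obtain ⟨w₀, hw₀, hb₀⟩ := ih (0 : Fin 2) (Sum.inl (e B)) (by rw [harg0]; rfl)
            simp only [SemForm, Equiv.symm_apply_apply] at hw₀
            exact ⟨w₀, hw₀, hb₀⟩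
        obtain ⟨w₀, hder₀, hb₀⟩ := hchild0
        -- child 1
        obtain ⟨w₁, hw₁, hb₁⟩ := ih (1 : Fin 2) (Sum.inr ⟨j, ⟨i + 1, hlt⟩⟩) harg1
        simp only [SemForm] at hw₁
        -- combine
        have hdi1 : (rl j).output.drop (i + 1) = s' :: tl := by
          rw [← List.drop_drop, hdrop]
          rfl
        have hdi : (rl j).output.drop i = s :: (rl j).output.drop (i + 1) := by
          rw [hdrop, hdi1]
        refine ⟨w₀ ++ w₁, hd.trans ?_, ?_⟩
        · rw [hdi]
          exact derives_concat hder₀ hw₁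
        · rw [beval_cat ts, hb₀, hb₁, chat_append]
    rcases hmem with ⟨B, j, hsim, hch, hrhs⟩ | ⟨j, i, hX, hrhs⟩
    · refine key j 0 ?_ hrhs
      refine ((simLHS_derives hsim).trans hch.derives).trans ?_
      have hp : g.Produces [Symbol.nonterminal (rl j).input] (rl j).output :=
        ⟨rl j, hrl j, ContextFreeRule.Rewrites.input_output⟩
      simpa using hp.single
    · subst hX
      refine key j i ?_ hrhs
      simp only [SemForm]
      rfl

end Soundness
section Completeness

open ContextFreeGrammar

universe u
variable {T : Type} {g : ContextFreeGrammar.{0} T} {n m K : ℕ}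
variable {c : T → Fin n → Bool} {e : g.NT ≃ Fin m} {rl : Fin K → ContextFreeRule T g.NT}

/-- A tree matching a grammar symbol. -/
def TreeOK (c : T → Fin n → Bool) (e : g.NT ≃ Fin m) (rl : Fin K → ContextFreeRule T g.NT) :
    Symbol T g.NT → Tm Sym3 ar3 → Prop
  | .terminal a, t => t = tmOf (List.ofFn (c a))
  | .nonterminal B, t => (rtgOf c e rl).Derives (Sum.inl (e B)) t

lemma build_step {X : NTy m rl} {j : Fin K} {i : ℕ}
    {s : Symbol T g.NT} {t₀ t₁ : Tm Sym3 ar3} (hlt : i + 1 < (rl j).output.length)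
    (hmem : (X,
        (⟨.cat, ![symArg c e rl s, Sum.inl (Sum.inr ⟨j, ⟨i + 1, hlt⟩⟩)]⟩ : RHS m rl))
        ∈ prodsOf c e rl)
    (h₀ : TreeOK c e rl s t₀)
    (h₁ : (rtgOf c e rl).Derives (Sum.inr ⟨j, ⟨i + 1, hlt⟩⟩) t₁) :
    (rtgOf c e rl).Derives X (Tm.app Sym3.cat ![t₀, t₁]) := by
  refine RTG.Derives.step (G := rtgOf c e rl) _ Sym3.cat
    ![symArg c e rl s, Sum.inl (Sum.inr ⟨j, ⟨i + 1, hlt⟩⟩)] ![t₀, t₁] hmem ?_ ?_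
  · rintro ⟨iv, hiv⟩ B hB
    match iv, hiv with
    | 0, _ =>
      cases s with
      | terminal a => exact absurd hB (by intro h; cases h)
      | nonterminal B' =>
        have : (Sum.inl (Sum.inl (e B')) : NTy m rl ⊕ Tm Sym3 ar3) = Sum.inl B := hB
        injection this with this
        rw [← this]
        exact h₀
    | 1, _ =>
      have : (Sum.inl (Sum.inr ⟨j, ⟨i + 1, hlt⟩⟩) : NTy m rl ⊕ Tm Sym3 ar3) = Sum.inl B := hB
      injection this with this
      rw [← this]
      exact h₁
    | (_ + 2), h => exact absurd h (by simp only [ar3]; omega)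
  · rintro ⟨iv, hiv⟩ u hu
    match iv, hiv with
    | 0, _ =>
      cases s with
      | terminal a =>
        have : (Sum.inr (tmOf (List.ofFn (c a))) : NTy m rl ⊕ Tm Sym3 ar3) = Sum.inr u := hu
        injection this with this
        rw [← this]
        exact h₀
      | nonterminal B' => exact absurd hu (by intro h; cases h)
    | 1, _ => exact absurd hu (by intro h; cases h)
    | (_ + 2), h => exact absurd h (by simp only [ar3]; omega)


lemma build : ∀ (l : List (Tm Sym3 ar3)) (j : Fin K) (i : ℕ) (t₀ : Tm Sym3 ar3)
    (hi : i < (rl j).output.length),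
    List.Forall₂ (TreeOK c e rl) ((rl j).output.drop i) (t₀ :: l) →
    (rtgOf c e rl).Derives (Sum.inr ⟨j, ⟨i, hi⟩⟩) (foldTm t₀ l) := by
  intro l
  induction l with
  | nil =>
    intro j i t₀ hi hf
    obtain ⟨s, γ, hs, hγ, hdrop⟩ := List.forall₂_cons_right_iff.mp hf
    have hγnil : γ = [] := by cases hγ; rfl
    subst hγnil
    cases s with
    | terminal a =>
      have hmem : ((Sum.inr ⟨j, ⟨i, hi⟩⟩ : NTy m rl),
          headProd rl (tmOf (List.ofFn (c a)))) ∈ prodsOf c e rl :=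
        Or.inr ⟨j, ⟨i, hi⟩, rfl, rhsOf_eq_terminal hdrop⟩
      have := derives_headProd (c := c) (e := e) hmem
      have hts : t₀ = tmOf (List.ofFn (c a)) := hs
      rw [show foldTm t₀ [] = t₀ from rfl, hts]
      exact this
    | nonterminal B =>
      have hsim : SimLHS e rl (Sum.inr ⟨j, ⟨i, hi⟩⟩) B := hdrop
      exact derives_lift hsim Relation.ReflTransGen.refl hs
  | cons t₁ l ih =>
    intro j i t₀ hi hf
    obtain ⟨s, γ, hs, hγ', hdrop⟩ := List.forall₂_cons_right_iff.mp hf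
    have hγ : List.Forall₂ (TreeOK c e rl) γ (t₁ :: l) := hγ'
    have hγd : (rl j).output.drop (i + 1) = γ := by
      rw [← List.drop_drop, hdrop]
      rfl
    have hγne : γ ≠ [] := by
      intro hnil
      rw [hnil] at hγ
      cases hγ
    have hlt : i + 1 < (rl j).output.length := by
      by_contra hcon
      have : (rl j).output.drop (i + 1) = [] := List.drop_eq_nil_of_le (by omega)
      rw [hγd] at this
      exact hγne this
    obtain ⟨s', tl, rfl⟩ : ∃ s' tl, γ = s' :: tl := by
      cases γ with
      | nil => exact absurd rfl hγne
      | cons a b => exact ⟨a, b, rfl⟩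
    have hmem : ((Sum.inr ⟨j, ⟨i, hi⟩⟩ : NTy m rl),
        (⟨.cat, ![symArg c e rl s, Sum.inl (Sum.inr ⟨j, ⟨i + 1, hlt⟩⟩)]⟩ : RHS m rl))
        ∈ prodsOf c e rl :=
      Or.inr ⟨j, ⟨i, hi⟩, rfl, rhsOf_eq_long (by rw [hdrop]) hlt⟩
    have h₁ : (rtgOf c e rl).Derives (Sum.inr ⟨j, ⟨i + 1, hlt⟩⟩) (foldTm t₁ l) := by
      refine ih j (i + 1) t₁ hlt ?_
      rw [hγd]
      exact hγ
    exact build_step hlt hmem hs h₁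

end Completeness
section Complete2

open ContextFreeGrammar

universe u
variable {T : Type} {g : ContextFreeGrammar.{0} T} {n m K : ℕ}
variable {c : T → Fin n → Bool} {e : g.NT ≃ Fin m} {rl : Fin K → ContextFreeRule T g.NT}

lemma terminal_injective : Function.Injective (Symbol.terminal : T → Symbol T g.NT) := by
  intro a b h
  injection h

lemma decomp (hn : 1 ≤ n) :
    ∀ (α : List (Symbol T g.NT)) (k : ℕ) (w : List T),
    DerN g k α (List.map Symbol.terminal w) →
    (∀ k' ≤ k, ∀ (A : g.NT) (w' : List T),
      DerN g k' [Symbol.nonterminal A] (List.map Symbol.terminal w') →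
      ∃ t, (rtgOf c e rl).Derives (Sum.inl (e A)) t ∧ beval t = chat n c w') →
    ∃ ts, List.Forall₂ (TreeOK c e rl) α ts ∧ (ts.map beval).flatten = chat n c w := by
  intro α
  induction α with
  | nil =>
    intro k w h hP
    have hx : List.map Symbol.terminal w = List.map (Symbol.terminal : T → Symbol T g.NT) [] :=
      DerN.terminal_eq (w := []) (by simpa using h)
    have hw : w = [] := (List.map_injective_iff.mpr terminal_injective) hx
    subst hw
    exact ⟨[], List.Forall₂.nil, by simp [chat_nil]⟩
  | cons s β ih =>
    intro k w h hP
    have h' : DerN g k ([s] ++ β) (List.map Symbol.terminal w) := h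
    obtain ⟨k₁, k₂, x₁, x₂, hk, hx, h1, h2⟩ := h'.append_split [s] β rfl
    obtain ⟨w₁, w₂, hw, hx₁, hx₂⟩ : ∃ w₁ w₂, w = w₁ ++ w₂ ∧
        x₁ = List.map Symbol.terminal w₁ ∧ x₂ = List.map Symbol.terminal w₂ := by
      rcases List.map_eq_append_iff.mp hx with ⟨w₁, w₂, hw, hx₁, hx₂⟩
      exact ⟨w₁, w₂, hw, hx₁.symm, hx₂.symm⟩
    subst hw hx₁ hx₂
    obtain ⟨ts, hts, hbe⟩ := ih k₂ w₂ h2 (fun k' hk' => hP k' (by omega))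
    cases s with
    | terminal a =>
      have hx1 : List.map Symbol.terminal w₁ =
          List.map (Symbol.terminal : T → Symbol T g.NT) [a] :=
        DerN.terminal_eq (w := [a]) (by simpa using h1)
      have hw₁ : w₁ = [a] := (List.map_injective_iff.mpr terminal_injective) hx1
      subst hw₁
      refine ⟨tmOf (List.ofFn (c a)) :: ts, List.Forall₂.cons rfl hts, ?_⟩
      simp only [List.map_cons, List.flatten_cons, beval_tmOf (ofFn_ne_nil hn c a), hbe]
      rw [chat_append, chat_singleton]
    | nonterminal A =>
      obtain ⟨t₀, ht₀, hb₀⟩ := hP k₁ (by omega) A w₁ h1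
      have htok : TreeOK c e rl (Symbol.nonterminal A) t₀ := ht₀
      refine ⟨t₀ :: ts, List.Forall₂.cons htok hts, ?_⟩
      simp only [List.map_cons, List.flatten_cons, hb₀, hbe]
      rw [chat_append]

lemma rtg_complete (hn : 1 ≤ n) (hrl : ∀ j, rl j ∈ g.rules)
    (hsurj : ∀ r ∈ g.rules, ∃ j, rl j = r) (hε : ∀ r ∈ g.rules, r.output ≠ []) :
    ∀ (k : ℕ) (A : g.NT) (w : List T),
    DerN g k [Symbol.nonterminal A] (List.map Symbol.terminal w) →
    ∃ t, (rtgOf c e rl).Derives (Sum.inl (e A)) t ∧ beval t = chat n c w := by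
  intro k
  induction k using Nat.strong_induction_on with
  | _ k ihk =>
    intro A w h
    generalize hu : List.map Symbol.terminal w = x at h
    cases h with
    | refl =>
      exfalso
      cases w <;> simp at hu
    | @head k' _ v _ hp h' =>
      subst hu
      obtain ⟨r, hr, hrw⟩ := hp
      obtain ⟨p, q, hin, hout⟩ := hrw.exists_parts
      have hpq : p = [] ∧ q = [] := by
        have := congrArg List.length hin
        simp at this
        constructor <;> [exact List.length_eq_zero_iff.mp (by omega);
          exact List.length_eq_zero_iff.mp (by omega)]
      obtain ⟨rfl, rfl⟩ := hpq
      have hA : r.input = A := by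
        simp at hin
        exact hin.symm
      have hv : v = r.output := by rw [hout]; simp
      subst hv
      obtain ⟨j, rfl⟩ := hsurj r hr
      obtain ⟨ts, hts, hbe⟩ := decomp (c := c) (e := e) hn (rl j).output k' w h'
        (fun k'' hk'' A' w' hd => ihk k'' (by omega) A' w' hd)
      have hchain : UChain g A (rl j).input := by rw [hA]
      -- case on the shape of the output
      rcases houtput : (rl j).output with _ | ⟨s, rest⟩
      · exact absurd houtput (hε (rl j) hr)
      · rw [houtput] at hts
        obtain ⟨t₀, ts', hok₀, hts', rfl⟩ := List.forall₂_cons_left_iff.mp hts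
        cases rest with
        | nil =>
          -- output = [s]
          have hts'nil : ts' = [] := by cases hts'; rfl
          subst hts'nil
          cases s with
          | terminal a =>
            have hmem : ((Sum.inl (e A) : NTy m rl),
                headProd rl (tmOf (List.ofFn (c a)))) ∈ prodsOf c e rl :=
              Or.inl ⟨A, j, rfl, hchain, rhsOf_eq_terminal (by rw [houtput]; rfl)⟩
            refine ⟨t₀, ?_, ?_⟩
            · have htt : t₀ = tmOf (List.ofFn (c a)) := hok₀
              rw [htt]
              exact derives_headProd hmem
            · simpa using hbe
          | nonterminal B =>
            have hunit : UChain g A B := by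
              refine Relation.ReflTransGen.single ?_
              exact ⟨rl j, hr, hA, houtput⟩
            refine ⟨t₀, ?_, by simpa using hbe⟩
            exact derives_lift (X := Sum.inl (e A)) rfl hunit hok₀
        | cons s' tl =>
          -- output = s :: s' :: tl
          obtain ⟨t₁, ts'', hok₁, hts''0, rfl⟩ := List.forall₂_cons_left_iff.mp hts'
          have hts' : List.Forall₂ (TreeOK c e rl) (s' :: tl) (t₁ :: ts'') :=
            List.Forall₂.cons hok₁ hts''0
          have hlt : (0 : ℕ) + 1 < (rl j).output.length := by
            rw [houtput]; simp
          have hmem : ((Sum.inl (e A) : NTy m rl),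
              (⟨.cat, ![symArg c e rl s, Sum.inl (Sum.inr ⟨j, ⟨0 + 1, hlt⟩⟩)]⟩ : RHS m rl))
              ∈ prodsOf c e rl :=
            Or.inl ⟨A, j, rfl, hchain, rhsOf_eq_long (by rw [houtput]; rfl) hlt⟩
          have hb : (rtgOf c e rl).Derives (Sum.inr ⟨j, ⟨0 + 1, hlt⟩⟩) (foldTm t₁ ts'') := by
            refine build ts'' j (0 + 1) t₁ hlt ?_
            have : (rl j).output.drop (0 + 1) = s' :: tl := by rw [houtput]; rfl
            rw [this]
            exact hts'
          refine ⟨Tm.app Sym3.cat ![t₀, foldTm t₁ ts''], build_step hlt hmem hok₀ hb, ?_⟩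
          rw [beval_cat, ← hbe]
          simp [beval_foldTm]

end Complete2
section Final

open ContextFreeGrammar

universe u
variable {T : Type} {g : ContextFreeGrammar.{0} T} {n m K : ℕ}
variable {c : T → Fin n → Bool} {e : g.NT ≃ Fin m} {rl : Fin K → ContextFreeRule T g.NT}

lemma rtg_corresponds (hn : 1 ≤ n) (hrl : ∀ j, rl j ∈ g.rules)
    (hsurj : ∀ r ∈ g.rules, ∃ j, rl j = r) (hε : ∀ r ∈ g.rules, r.output ≠ []) :
    Corresponds n c g (rtgOf c e rl) := by
  apply Set.Subset.antisymm
  · rintro x ⟨t, ht, rfl⟩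
    obtain ⟨w, hw, hb⟩ := rtg_sound hn hrl ht
    refine ⟨w, ?_, hb.symm⟩
    have hw' : g.Derives (SemForm e rl (Sum.inl (e g.initial)))
        (List.map Symbol.terminal w) := hw
    simp only [SemForm, Equiv.symm_apply_apply] at hw'
    exact hw'
  · rintro x ⟨w, hw, rfl⟩
    obtain ⟨k, hk⟩ := derN_of_derives hw
    obtain ⟨t, ht, hb⟩ := rtg_complete hn hrl hsurj hε k g.initial w hk
    exact ⟨t, ht, hb⟩

end Final
/-- Let `T` be a finite alphabet, `n ≥ 1`, and `c : T → (Fin n → Bool)`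
an injective fixed-length encoding, extended letterwise to `ĉ`.  Every context-free
grammar over `T` without ε-productions has a corresponding regular tree grammar over
`{@ : 2, 0 : 0, 1 : 0}` whose trees denote exactly the encodings of its words; and for
two such context-free grammars with corresponding tree grammars,
`L(G₁) ∩ L(G₂) ≠ ∅` iff some trees `t₁ ∈ L(G₁')`, `t₂ ∈ L(G₂')` satisfy `⟦t₁⟧ = ⟦t₂⟧`. -/
theorem cfg_encoding_into_bitstring_trees {T : Type} [Fintype T] [DecidableEq T]
    (n : ℕ) (hn : 1 ≤ n) (c : T → (Fin n → Bool)) (hc : Function.Injective c) :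
    (∀ G : ContextFreeGrammar T, Finite G.NT → (∀ r ∈ G.rules, r.output ≠ []) →
      ∃ G' : RTG Sym3 ar3, Corresponds n c G G') ∧
    (∀ (G₁ G₂ : ContextFreeGrammar T) (G₁' G₂' : RTG Sym3 ar3),
      Finite G₁.NT → Finite G₂.NT →
      (∀ r ∈ G₁.rules, r.output ≠ []) → (∀ r ∈ G₂.rules, r.output ≠ []) →
      Corresponds n c G₁ G₁' → Corresponds n c G₂ G₂' →
      ((∃ w, w ∈ G₁.language ∧ w ∈ G₂.language) ↔
        ∃ t₁ ∈ G₁'.lang, ∃ t₂ ∈ G₂'.lang, beval t₁ = beval t₂)) := by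

  constructor
  · intro G hfin hε
    have : Fintype G.NT := Fintype.ofFinite _
    let e := Fintype.equivFin G.NT
    let L := G.rules.toList
    refine ⟨rtgOf c e (fun j : Fin L.length => L.get j), rtg_corresponds hn ?_ ?_ hε⟩
    · intro j
      exact Finset.mem_toList.mp (L.get_mem j)
    · intro r hr
      have hmem : r ∈ L := Finset.mem_toList.mpr hr
      obtain ⟨j, hj⟩ := List.get_of_mem hmem
      exact ⟨j, hj⟩
  · intro G₁ G₂ G₁' G₂' _ _ _ _ hc₁ hc₂
    constructor
    · rintro ⟨w, hw₁, hw₂⟩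
      have h₁ : chat n c w ∈ beval '' G₁'.lang := by
        rw [hc₁]; exact ⟨w, hw₁, rfl⟩
      have h₂ : chat n c w ∈ beval '' G₂'.lang := by
        rw [hc₂]; exact ⟨w, hw₂, rfl⟩
      obtain ⟨t₁, ht₁, hb₁⟩ := h₁
      obtain ⟨t₂, ht₂, hb₂⟩ := h₂
      exact ⟨t₁, ht₁, t₂, ht₂, by rw [hb₁, hb₂]⟩
    · rintro ⟨t₁, ht₁, t₂, ht₂, hb⟩
      have h₁ : beval t₁ ∈ chat n c '' G₁.language := by
        rw [← hc₁]; exact ⟨t₁, ht₁, rfl⟩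
      have h₂ : beval t₂ ∈ chat n c '' G₂.language := by
        rw [← hc₂]; exact ⟨t₂, ht₂, rfl⟩
      obtain ⟨w₁, hw₁, hcw₁⟩ := h₁
      obtain ⟨w₂, hw₂, hcw₂⟩ := h₂
      have hww : w₁ = w₂ := chat_injective hn hc (by rw [hcw₁, hcw₂, hb])
      exact ⟨w₁, hw₁, hww ▸ hw₂⟩


end SyGuS
end

section
/- Over the ranked alphabet {g : 1, g′ : 1, h : 1, x : 0}, call a context B any finite composition of the unary symbols g and g′ (possibly the identity), and let L := { B(h(Bⁿ(x))) : B a context over {g, g′}, n ≥ 0 }, where Bⁿ denotes the n-fold composition of B. Then L is not a regular tree language: no deterministic bottom-up tree automaton accepts exactly L. -/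
namespace SyGuS

/-- The ranked alphabet `{g : 1, g' : 1, h : 1, x : 0}`. -/
inductive Sym14 : Type
  | g | g' | h | x
  deriving DecidableEq

instance : Fintype Sym14 :=
  ⟨{Sym14.g, Sym14.g', Sym14.h, Sym14.x}, by intro s; cases s <;> simp⟩

def ar14 : Sym14 → ℕ
  | .g => 1
  | .g' => 1
  | .h => 1
  | .x => 0

/-- Application of a unary symbol. -/
def ap1 (s : Sym14) (h : ar14 s = 1) (t : Tm Sym14 ar14) : Tm Sym14 ar14 :=
  .app s (fun _ => t)

/-- The constant `x`. -/
def xTm : Tm Sym14 ar14 := .app .x (fun i => i.elim0)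

/-- A context `B` over `{g, g'}` (a finite, possibly empty, composition of the unary
symbols `g` and `g'`, `true` standing for `g` and `false` for `g'`), applied to `t`. -/
def applyCtx (B : List Bool) (t : Tm Sym14 ar14) : Tm Sym14 ar14 :=
  B.foldr (fun b acc => ap1 (if b then .g else .g') (by cases b <;> rfl) acc) t

/-- The language `L = { B(h(Bⁿ(x))) : B a context over {g, g'}, n ≥ 0 }`. -/
def L14 : Set (Tm Sym14 ar14) :=
  { t | ∃ (B : List Bool) (n : ℕ), t = applyCtx B (ap1 .h rfl ((applyCtx B)^[n] xTm)) }

lemma run_un_congr (A : DTA Sym14 ar14) (s : Sym14) (hs : ar14 s = 1)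
    {t t' : Tm Sym14 ar14} (h : A.run t = A.run t') :
    A.run (ap1 s hs t) = A.run (ap1 s hs t') := by
  cases s <;> simp [ap1, DTA.run, finSeq, h]

lemma run_ctx_congr (A : DTA Sym14 ar14) (B : List Bool) {t t' : Tm Sym14 ar14}
    (h : A.run t = A.run t') :
    A.run (applyCtx B t) = A.run (applyCtx B t') := by
  induction B with
  | nil => exact h
  | cons b B ih => cases b <;> exact run_un_congr A _ (by simp [ar14]) ih

lemma ctx_h_inj : ∀ (B B' : List Bool) (s s' : Tm Sym14 ar14),
    applyCtx B (ap1 .h rfl s) = applyCtx B' (ap1 .h rfl s') → B = B' ∧ s = s' := by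
  intro B
  induction B with
  | nil =>
    intro B' s s' h
    cases B' with
    | nil =>
      simp only [applyCtx, List.foldr, ap1] at h
      injection h with h1 h2
      exact ⟨rfl, congrFun h2 ⟨0, Nat.one_pos⟩⟩
    | cons b B' =>
      exfalso
      simp only [applyCtx, List.foldr, ap1] at h
      cases b <;> injection h with h1 h2 <;> exact Sym14.noConfusion h1
  | cons b B ih =>
    intro B' s s' h
    cases B' with
    | nil =>
      exfalso
      simp only [applyCtx, List.foldr, ap1] at h
      cases b <;> injection h with h1 h2 <;> exact Sym14.noConfusion h1
    | cons b' B' =>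
      simp only [applyCtx, List.foldr, ap1] at h
      cases b <;> cases b' <;> injection h with h1 h2 <;>
        first
        | exact Sym14.noConfusion h1
        | · have h3 := congrFun h2 ⟨0, Nat.one_pos⟩
            obtain ⟨e1, e2⟩ := ih B' s s' h3
            exact ⟨by rw [e1], e2⟩

lemma ctx_x_inj : ∀ (B B' : List Bool),
    applyCtx B xTm = applyCtx B' xTm → B = B' := by
  intro B
  induction B with
  | nil =>
    intro B' h
    cases B' with
    | nil => rfl
    | cons b B' =>
      exfalso
      simp only [applyCtx, List.foldr, ap1, xTm] at h
      cases b <;> injection h with h1 h2 <;> exact Sym14.noConfusion h1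
  | cons b B ih =>
    intro B' h
    cases B' with
    | nil =>
      exfalso
      simp only [applyCtx, List.foldr, ap1, xTm] at h
      cases b <;> injection h with h1 h2 <;> exact Sym14.noConfusion h1
    | cons b' B' =>
      simp only [applyCtx, List.foldr, ap1] at h
      cases b <;> cases b' <;> injection h with h1 h2 <;>
        first
        | exact Sym14.noConfusion h1
        | · have h3 := congrFun h2 ⟨0, Nat.one_pos⟩
            rw [ih B' h3]

lemma applyCtx_append (B C : List Bool) (t : Tm Sym14 ar14) :
    applyCtx (B ++ C) t = applyCtx B (applyCtx C t) := by
  simp [applyCtx, List.foldr_append]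

lemma iterate_applyCtx (B : List Bool) (n : ℕ) :
    (applyCtx B)^[n] xTm = applyCtx (List.flatten (List.replicate n B)) xTm := by
  induction n with
  | zero => rfl
  | succ n ih =>
    rw [Function.iterate_succ_apply', ih, List.replicate_succ, List.flatten_cons,
      applyCtx_append]

/-- The language `L = { B(h(Bⁿ(x))) }` over the ranked alphabet
`{g : 1, g' : 1, h : 1, x : 0}` is not a regular tree language: no deterministic
bottom-up tree automaton accepts exactly `L`. -/
theorem L14_not_regular : ¬ IsRegularTreeLang L14 := by
  rintro ⟨A, hL⟩
  classical
  set m := Fintype.card (Option A.Q) with hm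
  have hcard : Fintype.card (Option A.Q) < Fintype.card (Fin m → Bool) := by
    simp only [Fintype.card_fun, Fintype.card_fin, Fintype.card_bool]
    exact (Nat.lt_two_pow_self : m < 2 ^ m)
  obtain ⟨v, w, hvw, hfeq⟩ := Fintype.exists_ne_map_eq_of_card_lt
    (fun v : Fin m → Bool => A.run (applyCtx (List.ofFn v) xTm)) hcard
  have hm0 : 0 < m := by
    rcases Nat.eq_zero_or_pos m with h0 | h0
    · exact absurd (funext fun i => absurd i.2 (by omega)) hvw
    · exact h0
  set B := List.ofFn v with hB
  set C := List.ofFn w with hC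
  have hBC : B ≠ C := fun hbc => hvw (List.ofFn_inj.mp hbc)
  have hBl : B.length = m := List.length_ofFn (f := v)
  have hCl : C.length = m := List.length_ofFn (f := w)
  -- t1 = B(h(B(x))) ∈ L14
  have ht1 : applyCtx B (ap1 .h rfl (applyCtx B xTm)) ∈ L14 :=
    ⟨B, 1, by rw [Function.iterate_one]⟩
  -- runs coincide
  have hrun : A.run (applyCtx B (ap1 .h rfl (applyCtx C xTm)))
      = A.run (applyCtx B (ap1 .h rfl (applyCtx B xTm))) :=
    run_ctx_congr A B (run_un_congr A .h rfl hfeq.symm)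
  have ht2 : applyCtx B (ap1 .h rfl (applyCtx C xTm)) ∈ L14 := by
    rw [hL] at ht1 ⊢
    obtain ⟨q, hq, hr⟩ := ht1
    exact ⟨q, hq, hrun.trans hr⟩
  obtain ⟨B', n, heq⟩ := ht2
  obtain ⟨hBB', hinner⟩ := ctx_h_inj B B' _ _ heq
  subst hBB'
  rw [iterate_applyCtx] at hinner
  have hCeq : C = List.flatten (List.replicate n B) := ctx_x_inj _ _ hinner
  have hlen : m = n * m := by
    have := congrArg List.length hCeq
    simpa [hCl, hBl, List.length_flatten, List.map_replicate,
      List.sum_replicate, Nat.smul_one_eq_cast] using this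
  have hn1 : n = 1 :=
    Nat.eq_of_mul_eq_mul_right hm0 (by rw [one_mul]; exact hlen.symm)
  apply hBC
  rw [hCeq, hn1]
  simp

end SyGuS
end
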